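/- arXiv:hep-th/9407191 — 3 statements merged into one kernel-verified Lean document; each statement's English description precedes it below -/
import Mathlib

section
/- Fix nonnegative integers n, n₁, N with 2n₁ ≤ n. The number of partitions of N of the form N = n₁² + a₁ + ⋯ + a_{n₁} with n−2n₁ ≥ a₁ ≥ ⋯ ≥ a_{n₁} ≥ 0 equals the number of partitions of N with largest part at most ⌊(n+1)/2⌋, at most ⌊n/2⌋ parts, exactly n₁ diagonal hooks, and all n₁ successive ranks equal to 0 or 1. -/
/-- Length of the `l`-th column (1-indexed) of the Ferrers diagram:
the number of parts that are `≥ l`. -/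
def colLen {N : ℕ} (p : Nat.Partition N) (l : ℕ) : ℕ :=
  (p.parts.filter (fun x => l ≤ x)).card

/-- Length of the `l`-th row (1-indexed) of the Ferrers diagram, i.e. the `l`-th
largest part: the number of columns of length `≥ l`. -/
def rowLen {N : ℕ} (p : Nat.Partition N) (l : ℕ) : ℕ :=
  ((Finset.range (N + 1)).filter (fun m => l ≤ colLen p (m + 1))).card

/-- The number of diagonal hooks (right angles) = size of the Durfee square. -/
def durfee {N : ℕ} (p : Nat.Partition N) : ℕ :=
  ((Finset.range (N + 1)).filter (fun l => l + 1 ≤ rowLen p (l + 1))).card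

/-- The `l`-th successive rank (1-indexed): length of the `l`-th row minus length
of the `l`-th column. -/
def srank {N : ℕ} (p : Nat.Partition N) (l : ℕ) : ℤ :=
  (rowLen p l : ℤ) - (colLen p l : ℤ)

namespace Q32aux

open Finset

lemma downset_eq_range {S : Finset ℕ} (h : ∀ x ∈ S, ∀ y, y ≤ x → y ∈ S) :
    S = Finset.range S.card := by
  have hsub : S ⊆ Finset.range S.card := by
    intro x hx
    have : Finset.range (x + 1) ⊆ S := by
      intro y hy
      exact h x hx y (by simpa [Nat.lt_succ_iff] using Finset.mem_range.1 hy)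
    have := Finset.card_le_card this
    simp only [Finset.card_range] at this
    exact Finset.mem_range.2 this
  exact Finset.eq_of_subset_of_card_le hsub (by simp)

lemma card_filter_range_antitone {n : ℕ} {P : ℕ → Prop} [DecidablePred P]
    (hdown : ∀ x, P x → ∀ y, y ≤ x → P y) (hbd : ∀ x, P x → x < n) (t : ℕ) :
    t < ((Finset.range n).filter P).card ↔ P t := by
  have hS : (Finset.range n).filter P =
      Finset.range (((Finset.range n).filter P).card) := by
    apply downset_eq_range
    intro x hx y hy
    simp only [Finset.mem_filter, Finset.mem_range] at hx ⊢
    exact ⟨lt_of_le_of_lt hy hx.1, hdown x hx.2 y hy⟩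
  constructor
  · intro ht
    have : t ∈ (Finset.range n).filter P := by rw [hS]; exact Finset.mem_range.2 ht
    exact (Finset.mem_filter.1 this).2
  · intro ht
    have : t ∈ (Finset.range n).filter P :=
      Finset.mem_filter.2 ⟨Finset.mem_range.2 (hbd t ht), ht⟩
    rw [hS] at this
    exact Finset.mem_range.1 this

variable {N : ℕ} (p : Nat.Partition N)

lemma part_le {x : ℕ} (hx : x ∈ p.parts) : x ≤ N := by
  have := Multiset.single_le_sum (fun y _ => Nat.zero_le y) x hx
  rwa [p.parts_sum] at this

lemma colLen_anti : Antitone (colLen p) := by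
  intro l l' hll
  exact Multiset.card_le_card (Multiset.monotone_filter_right _ (fun x hx => le_trans hll hx))

lemma colLen_succ_eq_zero {m : ℕ} (hm : N ≤ m) : colLen p (m + 1) = 0 := by
  rw [colLen, Multiset.card_eq_zero, Multiset.filter_eq_nil]
  intro x hx
  have := part_le p hx
  omega

lemma rowLen_anti : Antitone (rowLen p) := by
  intro l l' hll
  exact Finset.card_le_card (Finset.monotone_filter_right _ (fun m _ hm => le_trans hll hm))

lemma lt_rowLen_iff {l m : ℕ} (hl : 1 ≤ l) : m < rowLen p l ↔ l ≤ colLen p (m + 1) := by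
  rw [rowLen]
  apply card_filter_range_antitone
  · intro x hx y hy
    exact le_trans hx (colLen_anti p (by omega))
  · intro x hx
    by_contra hc
    have : colLen p (x + 1) = 0 := colLen_succ_eq_zero p (by omega)
    omega

lemma lt_colLen_iff {l m : ℕ} (hl : 1 ≤ l) : m < colLen p l ↔ l ≤ rowLen p (m + 1) := by
  have := lt_rowLen_iff p (l := m + 1) (m := l - 1) (by omega)
  have h2 : l - 1 + 1 = l := by omega
  rw [h2] at this
  constructor
  · intro h
    have := this.2 (by omega)
    omega
  · intro h
    have := this.1 (by omega)
    omega

lemma lt_durfee_iff {t : ℕ} : t < durfee p ↔ t + 1 ≤ rowLen p (t + 1) := by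
  rw [durfee]
  apply card_filter_range_antitone
  · intro x hx y hy
    calc y + 1 ≤ x + 1 := by omega
    _ ≤ rowLen p (x + 1) := hx
    _ ≤ rowLen p (y + 1) := rowLen_anti p (by omega)
  · intro x hx
    have := (lt_rowLen_iff p (l := x + 1) (m := x) (by omega)).1 (by omega)
    have h0 : colLen p (x + 1) ≠ 0 := by omega
    by_contra hc
    exact h0 (colLen_succ_eq_zero p (by omega))

lemma colLen_one : colLen p 1 = Multiset.card p.parts := by
  rw [colLen]
  have : p.parts.filter (fun x => 1 ≤ x) = p.parts :=
    Multiset.filter_eq_self.2 (fun x hx => p.parts_pos hx)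
  rw [this]

lemma colLen_eq_zero_iff {K : ℕ} : colLen p (K + 1) = 0 ↔ ∀ x ∈ p.parts, x ≤ K := by
  rw [colLen, Multiset.card_eq_zero, Multiset.filter_eq_nil]
  constructor
  · intro h x hx; have := h x hx; omega
  · intro h x hx; have := h x hx; omega

lemma filter_lt_range (a K : ℕ) (h : a ≤ K) :
    (Finset.range K).filter (fun k => k < a) = Finset.range a := by
  ext k; simp only [Finset.mem_filter, Finset.mem_range]; omega

lemma sum_ite_lt (a K : ℕ) (h : a ≤ K) :
    (∑ k ∈ Finset.range K, if k + 1 ≤ a then 1 else 0) = a := by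
  rw [← Finset.card_filter]
  have : (Finset.range K).filter (fun k => k + 1 ≤ a) = Finset.range a := by
    ext k; simp only [Finset.mem_filter, Finset.mem_range]; omega
  rw [this, Finset.card_range]

lemma sum_card_filter_le (s : Multiset ℕ) (K : ℕ) (h : ∀ x ∈ s, x ≤ K) :
    (∑ m ∈ Finset.range K, (s.filter (fun x => m + 1 ≤ x)).card) = s.sum := by
  induction s using Multiset.induction with
  | empty => simp
  | cons a s ih =>
    have ha : a ≤ K := h a (Multiset.mem_cons_self a s)
    have hs : ∀ x ∈ s, x ≤ K := fun x hx => h x (Multiset.mem_cons_of_mem hx)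
    have : ∀ m, ((a ::ₘ s).filter (fun x => m + 1 ≤ x)).card
        = (if m + 1 ≤ a then 1 else 0) + (s.filter (fun x => m + 1 ≤ x)).card := by
      intro m
      rw [Multiset.filter_cons, Multiset.card_add]
      congr 1
      split <;> simp
    simp only [this]
    rw [Finset.sum_add_distrib, ih hs, sum_ite_lt a K ha, Multiset.sum_cons]

lemma sum_colLen : ∑ m ∈ Finset.range (N + 1), colLen p (m + 1) = N := by
  have := sum_card_filter_le p.parts (N + 1) (fun x hx => by have := part_le p hx; omega)
  simpa [colLen, p.parts_sum] using this

lemma partition_ext {q : Nat.Partition N}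
    (h : ∀ m, colLen p (m + 1) = colLen q (m + 1)) : p = q := by
  have hcount : ∀ (r : Nat.Partition N) (k : ℕ),
      Multiset.count (k + 1) r.parts = colLen r (k + 1) - colLen r (k + 2) := by
    intro r k
    have hsplit : r.parts.filter (fun x => k + 1 ≤ x)
        = r.parts.filter (fun x => x = k + 1) + r.parts.filter (fun x => k + 2 ≤ x) := by
      rw [Multiset.filter_add_filter]
      have h1 : Multiset.filter (fun a => a = k + 1 ∨ k + 2 ≤ a) r.parts
          = Multiset.filter (fun x => k + 1 ≤ x) r.parts := by
        apply Multiset.filter_congr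
        intro x _
        constructor
        · intro hx; omega
        · intro hx; omega
      have h2 : Multiset.filter (fun a => a = k + 1 ∧ k + 2 ≤ a) r.parts = 0 := by
        rw [Multiset.filter_eq_nil]
        intro x _ hx
        omega
      rw [h1, h2, add_zero]
    have := congrArg Multiset.card hsplit
    rw [Multiset.card_add] at this
    have hc : Multiset.count (k + 1) r.parts = (r.parts.filter (fun x => x = k + 1)).card := by
      rw [Multiset.count, Multiset.countP_eq_card_filter]
      congr 1
      apply Multiset.filter_congr
      intro x _
      exact ⟨fun hx => hx.symm, fun hx => hx.symm⟩
    rw [hc]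
    show _ = colLen r (k + 1) - colLen r (k + 2)
    rw [colLen, colLen]
    omega
  apply Nat.Partition.ext
  ext k
  rcases k with _ | k
  · have h1 : Multiset.count 0 p.parts = 0 := by
      rw [Multiset.count_eq_zero]
      intro hc
      exact absurd (p.parts_pos hc) (by omega)
    have h2 : Multiset.count 0 q.parts = 0 := by
      rw [Multiset.count_eq_zero]
      intro hc
      exact absurd (q.parts_pos hc) (by omega)
    rw [h1, h2]
  · rw [hcount p k, hcount q k, h k, h (k + 1)]

end Q32aux

namespace Q32aux

open Finset

section Mk

variable (n₁ : ℕ) (u v : ℕ → ℕ)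

/-- Column-length function of the partition with Durfee square `n₁`,
`u` the row-excesses (halved parts rounded up) and `v` the column-excesses. -/
def mk : ℕ → ℕ := fun m =>
  if m < n₁ then n₁ + v m
  else ((Finset.range n₁).filter (fun j => m + 1 - n₁ ≤ u j)).card

variable {n₁ u v}

lemma mk_lt {m : ℕ} (hm : m < n₁) : mk n₁ u v m = n₁ + v m := if_pos hm

lemma mk_ge {m : ℕ} (hm : n₁ ≤ m) :
    mk n₁ u v m = ((Finset.range n₁).filter (fun j => m + 1 - n₁ ≤ u j)).card :=
  if_neg (by omega)

lemma mk_ge_le {m : ℕ} (hm : n₁ ≤ m) : mk n₁ u v m ≤ n₁ := by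
  rw [mk_ge hm]
  exact le_trans (Finset.card_filter_le _ _) (by simp)

lemma mk_anti (hv : Antitone v) : Antitone (mk n₁ u v) := by
  intro m m' hmm
  rcases lt_or_ge m' n₁ with hm' | hm'
  · rw [mk_lt hm', mk_lt (show m < n₁ by omega)]
    exact Nat.add_le_add_left (hv hmm) n₁
  · rcases lt_or_ge m n₁ with hm | hm
    · calc mk n₁ u v m' ≤ n₁ := mk_ge_le hm'
      _ ≤ n₁ + v m := Nat.le_add_right _ _
      _ = mk n₁ u v m := (mk_lt hm).symm
    · rw [mk_ge hm, mk_ge hm']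
      exact Finset.card_le_card (Finset.monotone_filter_right _
        (fun j hj => by omega))

lemma succ_le_card_filter_iff (hu : Antitone u) (hu0 : ∀ j, n₁ ≤ j → u j = 0)
    {w : ℕ} (t : ℕ) (hw : 1 ≤ w) :
    t + 1 ≤ ((Finset.range n₁).filter (fun j => w ≤ u j)).card ↔ (t < n₁ ∧ w ≤ u t) := by
  have h1 := card_filter_range_antitone (n := n₁) (P := fun j => w ≤ u j)
    (fun x hx y hy => le_trans hx (hu hy))
    (fun x hx => by by_contra hc; have := hu0 x (by omega); omega) t
  rw [show (t + 1 ≤ _) = (t < ((Finset.range n₁).filter (fun j => w ≤ u j)).card) from rfl, h1]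
  constructor
  · intro ht
    refine ⟨?_, ht⟩
    by_contra hc
    have := hu0 t (by omega)
    omega
  · exact fun ht => ht.2

lemma mk_pairing (hu : Antitone u) (hv : Antitone v)
    (hu0 : ∀ j, n₁ ≤ j → u j = 0) (hv0 : ∀ j, n₁ ≤ j → v j = 0) (l m : ℕ) :
    l + 1 ≤ mk n₁ u v m ↔ m + 1 ≤ mk n₁ v u l := by
  rcases lt_or_ge m n₁ with hm | hm <;> rcases lt_or_ge l n₁ with hl | hl
  · rw [mk_lt hm, mk_lt hl]
    omega
  · -- m < n₁ ≤ l
    rw [mk_lt hm, mk_ge (u := v) (v := u) hl,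
      succ_le_card_filter_iff hv hv0 m (by omega)]
    omega
  · -- l < n₁ ≤ m
    rw [mk_lt (u := v) (v := u) hl, mk_ge hm,
      succ_le_card_filter_iff hu hu0 l (by omega)]
    omega
  · have hA := mk_ge_le (u := u) (v := v) hm
    have hB := mk_ge_le (u := v) (v := u) hl
    omega

lemma mk_sum {K : ℕ} (hK : ∀ j, u j ≤ K) :
    ∑ m ∈ Finset.range (n₁ + K), mk n₁ u v m
      = n₁ * n₁ + (∑ j ∈ Finset.range n₁, v j) + ∑ j ∈ Finset.range n₁, u j := by
  rw [Finset.range_eq_Ico, ← Finset.sum_Ico_consecutive _ (Nat.zero_le n₁) (Nat.le_add_right n₁ K),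
    ← Finset.range_eq_Ico]
  have h1 : ∑ m ∈ Finset.range n₁, mk n₁ u v m = n₁ * n₁ + ∑ j ∈ Finset.range n₁, v j := by
    rw [Finset.sum_congr rfl (fun m hm => mk_lt (Finset.mem_range.1 hm)),
      Finset.sum_add_distrib, Finset.sum_const, Finset.card_range, smul_eq_mul]
  have h2 : ∑ m ∈ Finset.Ico n₁ (n₁ + K), mk n₁ u v m = ∑ j ∈ Finset.range n₁, u j := by
    rw [Finset.sum_Ico_eq_sum_range]
    have h3 : ∀ i ∈ Finset.range (n₁ + K - n₁), mk n₁ u v (n₁ + i)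
        = ∑ j ∈ Finset.range n₁, if i + 1 ≤ u j then 1 else 0 := by
      intro i _
      rw [mk_ge (Nat.le_add_right _ _), Finset.card_filter]
      apply Finset.sum_congr rfl
      intro j _
      congr 1
      simp only [eq_iff_iff]
      omega
    rw [Finset.sum_congr rfl h3, Finset.sum_comm]
    apply Finset.sum_congr rfl
    intro j _
    have : n₁ + K - n₁ = K := by omega
    rw [this]
    exact sum_ite_lt (u j) K (hK j)
  rw [h1, h2]

end Mk

lemma countP_replicate (q : ℕ → Prop) [DecidablePred q] (k x : ℕ) :
    Multiset.countP q (Multiset.replicate k x) = if q x then k else 0 := by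
  induction k with
  | zero => simp
  | succ k ih =>
    rw [Multiset.replicate_succ, Multiset.countP_cons, ih]
    split <;> simp

lemma abel_sum (d : ℕ → ℕ) (hd : Antitone d) (M : ℕ) :
    (∑ m ∈ Finset.range M, (d m - d (m + 1)) * (m + 1)) + M * d M
      = ∑ m ∈ Finset.range M, d m := by
  induction M with
  | zero => simp
  | succ M ih =>
    rw [Finset.sum_range_succ, Finset.sum_range_succ (f := d)]
    have hb : d (M + 1) * (M + 1) ≤ d M * (M + 1) :=
      Nat.mul_le_mul_right _ (hd (Nat.le_succ M))
    have key : (d M - d (M + 1)) * (M + 1) + (M + 1) * d (M + 1) = d M * (M + 1) := by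
      rw [Nat.sub_mul, mul_comm (M + 1) (d (M + 1)), Nat.sub_add_cancel hb]
    have hmul : d M * (M + 1) = d M * M + d M := by ring
    have hmul2 : d M * M = M * d M := by ring
    omega

lemma telescope (d : ℕ → ℕ) (hd : Antitone d) {l M : ℕ} (hlM : l ≤ M) :
    ∑ m ∈ Finset.Ico l M, (d m - d (m + 1)) = d l - d M := by
  induction M, hlM using Nat.le_induction with
  | base => simp
  | succ M hlM ih =>
    rw [Finset.sum_Ico_succ_top hlM, ih]
    have h1 : d (M + 1) ≤ d M := hd (Nat.le_succ M)
    have h2 : d M ≤ d l := hd hlM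
    omega

/-- The partition whose `m`-th column (0-indexed) has length `d m`. -/
def toPartition (N M : ℕ) (d : ℕ → ℕ) (hd : Antitone d) (hM : d M = 0)
    (hsum : ∑ m ∈ Finset.range M, d m = N) : Nat.Partition N where
  parts := ∑ m ∈ Finset.range M, Multiset.replicate (d m - d (m + 1)) (m + 1)
  parts_pos := by
    intro i hi
    rw [Multiset.mem_sum] at hi
    obtain ⟨m, _, hm⟩ := hi
    have := Multiset.eq_of_mem_replicate hm
    omega
  parts_sum := by
    have h1 : (∑ m ∈ Finset.range M, Multiset.replicate (d m - d (m + 1)) (m + 1)).sum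
        = ∑ m ∈ Finset.range M, (Multiset.replicate (d m - d (m + 1)) (m + 1)).sum := by
      rw [← Multiset.coe_sumAddMonoidHom, map_sum]
    rw [h1]
    have h2 : ∀ m ∈ Finset.range M,
        (Multiset.replicate (d m - d (m + 1)) (m + 1)).sum = (d m - d (m + 1)) * (m + 1) := by
      intro m _
      rw [Multiset.sum_replicate, smul_eq_mul]
    rw [Finset.sum_congr rfl h2]
    have h3 := abel_sum d hd M
    rw [hM, Nat.mul_zero, Nat.add_zero] at h3
    rw [h3, hsum]

lemma colLen_toPartition (N M : ℕ) (d : ℕ → ℕ) (hd : Antitone d) (hM : d M = 0)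
    (hsum : ∑ m ∈ Finset.range M, d m = N) (l : ℕ) :
    colLen (toPartition N M d hd hM hsum) (l + 1) = d l := by
  rw [colLen, ← Multiset.countP_eq_card_filter]
  have h1 : Multiset.countP (fun x => l + 1 ≤ x)
        (∑ m ∈ Finset.range M, Multiset.replicate (d m - d (m + 1)) (m + 1))
      = ∑ m ∈ Finset.range M,
          Multiset.countP (fun x => l + 1 ≤ x)
            (Multiset.replicate (d m - d (m + 1)) (m + 1)) := by
    rw [← Multiset.coe_countPAddMonoidHom, map_sum]
  show Multiset.countP (fun x => l + 1 ≤ x)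
        (∑ m ∈ Finset.range M, Multiset.replicate (d m - d (m + 1)) (m + 1)) = d l
  rw [h1]
  have h2 : ∀ m ∈ Finset.range M,
      Multiset.countP (fun x => l + 1 ≤ x) (Multiset.replicate (d m - d (m + 1)) (m + 1))
        = if l ≤ m then d m - d (m + 1) else 0 := by
    intro m _
    rw [countP_replicate]
    congr 1
    simp only [eq_iff_iff]
    omega
  rw [Finset.sum_congr rfl h2, ← Finset.sum_filter]
  rcases le_or_gt l M with hlM | hlM
  · have hf : (Finset.range M).filter (fun m => l ≤ m) = Finset.Ico l M := by
      ext m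
      simp only [Finset.mem_filter, Finset.mem_range, Finset.mem_Ico]
      omega
    rw [hf, telescope d hd hlM, hM, Nat.sub_zero]
  · have hf : (Finset.range M).filter (fun m => l ≤ m) = ∅ := by
      ext m
      simp only [Finset.mem_filter, Finset.mem_range, Finset.notMem_empty, iff_false]
      omega
    rw [hf, Finset.sum_empty]
    have := hd (show M ≤ l by omega)
    omega


section Forward

variable (n₁ : ℕ) (a : Fin n₁ → ℕ)

/-- Extension of `a` to `ℕ` by zero. -/
def Aext : ℕ → ℕ := fun j => if h : j < n₁ then a ⟨j, h⟩ else 0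

lemma Aext_eq (p : Fin n₁) : Aext n₁ a p = a p := by
  rw [Aext, dif_pos p.isLt, Fin.eta]

lemma Aext_zero {j : ℕ} (hj : n₁ ≤ j) : Aext n₁ a j = 0 := by
  rw [Aext, dif_neg (by omega)]

variable {n₁ a}

lemma Aext_anti (ha : Antitone a) : Antitone (Aext n₁ a) := by
  intro j k hjk
  rcases lt_or_ge k n₁ with hk | hk
  · have hj : j < n₁ := by omega
    rw [Aext, dif_pos hk, Aext, dif_pos hj]
    exact ha (show (⟨j, hj⟩ : Fin n₁) ≤ ⟨k, hk⟩ from hjk)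
  · rw [Aext_zero n₁ a hk]
    exact Nat.zero_le _

lemma sum_Aext : ∑ j ∈ Finset.range n₁, Aext n₁ a j = ∑ p, a p := by
  rw [← Fin.sum_univ_eq_sum_range]
  exact Finset.sum_congr rfl (fun p _ => Aext_eq n₁ a p)

variable (n₁ a)

/-- Column lengths of the partition associated to `a`. -/
def dfun : ℕ → ℕ := mk n₁ (fun j => (Aext n₁ a j + 1) / 2) (fun j => Aext n₁ a j / 2)

/-- Row lengths of the partition associated to `a`. -/
def efun : ℕ → ℕ := mk n₁ (fun j => Aext n₁ a j / 2) (fun j => (Aext n₁ a j + 1) / 2)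

variable {n₁ a}

lemma alph_anti (ha : Antitone a) : Antitone (fun j => (Aext n₁ a j + 1) / 2) :=
  fun j k hjk => Nat.div_le_div_right (by have := Aext_anti ha hjk; omega)

lemma beth_anti (ha : Antitone a) : Antitone (fun j => Aext n₁ a j / 2) :=
  fun j k hjk => Nat.div_le_div_right (by have := Aext_anti ha hjk; omega)

lemma alph_zero : ∀ j, n₁ ≤ j → (Aext n₁ a j + 1) / 2 = 0 := by
  intro j hj; rw [Aext_zero n₁ a hj]

lemma beth_zero : ∀ j, n₁ ≤ j → Aext n₁ a j / 2 = 0 := by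
  intro j hj; rw [Aext_zero n₁ a hj]

lemma dfun_anti (ha : Antitone a) : Antitone (dfun n₁ a) := mk_anti (beth_anti ha)

lemma efun_anti (ha : Antitone a) : Antitone (efun n₁ a) := mk_anti (alph_anti ha)

section WithSum

variable {N : ℕ} (hN : N = n₁ ^ 2 + ∑ p, a p)
include hN

lemma Aext_le_N : ∀ j, Aext n₁ a j ≤ N := by
  intro j
  rcases lt_or_ge j n₁ with hj | hj
  · rw [Aext, dif_pos hj]
    have h1 : a ⟨j, hj⟩ ≤ ∑ p, a p :=
      Finset.single_le_sum (fun i _ => Nat.zero_le (a i)) (Finset.mem_univ _)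
    omega
  · rw [Aext_zero n₁ a hj]; exact Nat.zero_le _

lemma n₁_le_N : n₁ ≤ N + 1 := by
  rcases Nat.eq_zero_or_pos n₁ with h | h
  · omega
  · have : n₁ ≤ n₁ ^ 2 := by nlinarith
    omega

lemma dfun_vanish : dfun n₁ a (n₁ + (N + 1)) = 0 := by
  rw [dfun, mk_ge (Nat.le_add_right _ _)]
  rw [Finset.card_eq_zero, Finset.filter_eq_empty_iff]
  intro j _
  have := Aext_le_N (a := a) hN j
  omega

lemma dfun_sum : ∑ m ∈ Finset.range (n₁ + (N + 1)), dfun n₁ a m = N := by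
  rw [dfun, mk_sum (K := N + 1) (fun j => by have := Aext_le_N (a := a) hN j; omega)]
  have h1 : ∀ j ∈ Finset.range n₁, Aext n₁ a j / 2 + (Aext n₁ a j + 1) / 2 = Aext n₁ a j := by
    intro j _; omega
  rw [add_assoc, ← Finset.sum_add_distrib, Finset.sum_congr rfl h1, sum_Aext]
  have : n₁ * n₁ = n₁ ^ 2 := by ring
  omega

/-- The partition associated to `a`. -/
def Pa (ha : Antitone a) : Nat.Partition N :=
  toPartition N (n₁ + (N + 1)) (dfun n₁ a) (dfun_anti ha) (dfun_vanish hN) (dfun_sum hN)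

variable (ha : Antitone a)

lemma colLen_Pa (m : ℕ) : colLen (Pa hN ha) (m + 1) = dfun n₁ a m :=
  colLen_toPartition _ _ _ _ _ _ m

lemma efun_le (l : ℕ) : efun n₁ a l ≤ N + 1 := by
  have hn₁N := n₁_le_N (a := a) hN
  rcases lt_or_ge l n₁ with hl | hl
  · rw [efun, mk_lt hl]
    have h1 : Aext n₁ a l ≤ N := Aext_le_N hN l
    have h2 : n₁ ≤ n₁ ^ 2 := by nlinarith [show 1 ≤ n₁ by omega]
    have h3 : Aext n₁ a l ≤ ∑ p, a p := by
      rcases lt_or_ge l n₁ with hl' | hl'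
      · rw [Aext, dif_pos hl']
        exact Finset.single_le_sum (fun i _ => Nat.zero_le (a i)) (Finset.mem_univ _)
      · rw [Aext_zero n₁ a hl']; exact Nat.zero_le _
    omega
  · have := mk_ge_le (n₁ := n₁) (u := fun j => Aext n₁ a j / 2)
      (v := fun j => (Aext n₁ a j + 1) / 2) hl
    rw [efun]
    omega

lemma rowLen_Pa (l : ℕ) : rowLen (Pa hN ha) (l + 1) = efun n₁ a l := by
  rw [rowLen]
  have hpair := mk_pairing (alph_anti (a := a) ha) (beth_anti ha) alph_zero beth_zero
  have h1 : (Finset.range (N + 1)).filter (fun m => l + 1 ≤ colLen (Pa hN ha) (m + 1))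
      = Finset.range (efun n₁ a l) := by
    ext m
    simp only [Finset.mem_filter, Finset.mem_range]
    rw [colLen_Pa hN ha m]
    rw [show (dfun n₁ a) = mk n₁ (fun j => (Aext n₁ a j + 1) / 2)
      (fun j => Aext n₁ a j / 2) from rfl]
    rw [hpair l m]
    rw [show mk n₁ (fun j => Aext n₁ a j / 2) (fun j => (Aext n₁ a j + 1) / 2)
      = efun n₁ a from rfl]
    have := efun_le (a := a) hN l
    omega
  rw [h1, Finset.card_range]

lemma durfee_Pa : durfee (Pa hN ha) = n₁ := by
  rw [durfee]
  have h1 : (Finset.range (N + 1)).filter (fun l => l + 1 ≤ rowLen (Pa hN ha) (l + 1))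
      = Finset.range n₁ := by
    ext l
    simp only [Finset.mem_filter, Finset.mem_range]
    rw [rowLen_Pa hN ha l]
    have hn₁N := n₁_le_N (a := a) hN
    rcases lt_or_ge l n₁ with hl | hl
    · rw [efun, mk_lt hl]
      omega
    · have := mk_ge_le (n₁ := n₁) (u := fun j => Aext n₁ a j / 2)
        (v := fun j => (Aext n₁ a j + 1) / 2) hl
      rw [efun]
      omega
  rw [h1, Finset.card_range]

lemma srank_Pa (l : ℕ) (hl1 : 1 ≤ l) (hl2 : l ≤ n₁) :
    srank (Pa hN ha) l = 0 ∨ srank (Pa hN ha) l = 1 := by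
  rw [srank]
  have hl : l - 1 + 1 = l := by omega
  have hr := rowLen_Pa hN ha (l - 1)
  have hc := colLen_Pa hN ha (l - 1)
  rw [hl] at hr hc
  rw [hr, hc, efun, dfun, mk_lt (show l - 1 < n₁ by omega), mk_lt (show l - 1 < n₁ by omega)]
  omega

omit hN in
lemma Aext_le_box {n : ℕ} (hb : ∀ p, a p ≤ n - 2 * n₁) : ∀ j, Aext n₁ a j ≤ n - 2 * n₁ := by
  intro j
  rcases lt_or_ge j n₁ with hj | hj
  · rw [Aext, dif_pos hj]; exact hb _
  · rw [Aext_zero n₁ a hj]; exact Nat.zero_le _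

lemma parts_le_Pa {n : ℕ} (h2 : 2 * n₁ ≤ n) (hb : ∀ p, a p ≤ n - 2 * n₁) :
    ∀ x ∈ (Pa hN ha).parts, x ≤ (n + 1) / 2 := by
  rw [← colLen_eq_zero_iff]
  rw [show (n + 1) / 2 + 1 = ((n + 1) / 2) + 1 from rfl, colLen_Pa hN ha]
  rw [dfun, mk_ge (show n₁ ≤ (n + 1) / 2 by omega)]
  rw [Finset.card_eq_zero, Finset.filter_eq_empty_iff]
  intro j _
  have := Aext_le_box (a := a) hb j
  omega

lemma card_parts_Pa {n : ℕ} (h2 : 2 * n₁ ≤ n) (hb : ∀ p, a p ≤ n - 2 * n₁) :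
    Multiset.card (Pa hN ha).parts ≤ n / 2 := by
  rw [← colLen_one]
  rw [show (1 : ℕ) = 0 + 1 from rfl, colLen_Pa hN ha]
  rcases Nat.eq_zero_or_pos n₁ with h0 | h0
  · rw [dfun, mk_ge (by omega)]
    subst h0
    simp
  · rw [dfun, mk_lt (by omega)]
    have := Aext_le_box (a := a) hb 0
    omega

end WithSum

end Forward


section Inverse

variable {n n₁ N : ℕ} (p : Nat.Partition N)

/-- The inverse map: recover the sequence from row and column lengths. -/
def aP : Fin n₁ → ℕ := fun l => rowLen p ((l : ℕ) + 1) + colLen p ((l : ℕ) + 1) - 2 * n₁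

lemma hr_ge (hdur : durfee p = n₁) : ∀ l, l < n₁ → n₁ ≤ rowLen p (l + 1) := by
  intro l hl
  have h1 : n₁ - 1 < durfee p := by omega
  have h2 := (lt_durfee_iff p).1 h1
  have h3 : n₁ - 1 + 1 = n₁ := by omega
  rw [h3] at h2
  calc n₁ ≤ rowLen p n₁ := h2
  _ ≤ rowLen p (l + 1) := rowLen_anti p (by omega)

lemma hr_le (hdur : durfee p = n₁) : ∀ m, n₁ ≤ m → rowLen p (m + 1) ≤ n₁ := by
  intro m hm
  have h1 : ¬ (n₁ < durfee p) := by omega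
  rw [lt_durfee_iff p] at h1
  calc rowLen p (m + 1) ≤ rowLen p (n₁ + 1) := rowLen_anti p (by omega)
  _ ≤ n₁ := by omega

lemma hc_ge (hdur : durfee p = n₁) : ∀ l, l < n₁ → n₁ ≤ colLen p (l + 1) := by
  intro l hl
  have h2 := hr_ge p hdur l hl
  have h3 := (lt_colLen_iff p (l := l + 1) (m := n₁ - 1) (by omega)).2
  have h4 : n₁ - 1 + 1 = n₁ := by omega
  rw [h4] at h3
  have := h3 (by
    calc l + 1 ≤ n₁ := by omega
    _ ≤ rowLen p n₁ := by
        have h5 := hr_ge p hdur (n₁ - 1) (by omega)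
        rwa [h4] at h5)
  omega

lemma hc_le (hdur : durfee p = n₁) : ∀ m, n₁ ≤ m → colLen p (m + 1) ≤ n₁ := by
  intro m hm
  by_contra hc
  have h1 := (lt_colLen_iff p (l := m + 1) (m := n₁) (by omega)).1 (by omega)
  have h2 := hr_le p hdur n₁ le_rfl
  omega

lemma hsr (hdur : durfee p = n₁)
    (hrank : ∀ l, 1 ≤ l → l ≤ n₁ → srank p l = 0 ∨ srank p l = 1) :
    ∀ l, l < n₁ →
      rowLen p (l + 1) = colLen p (l + 1) ∨ rowLen p (l + 1) = colLen p (l + 1) + 1 := by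
  intro l hl
  have := hrank (l + 1) (by omega) (by omega)
  rw [srank] at this
  omega

lemma aP_anti (hdur : durfee p = n₁) : Antitone (aP (n₁ := n₁) p) := by
  intro l l' hll
  have hll' : (l : ℕ) ≤ (l' : ℕ) := hll
  have h1 := hr_ge p hdur l l.isLt
  have h2 := hc_ge p hdur l l.isLt
  have h3 : rowLen p ((l' : ℕ) + 1) ≤ rowLen p ((l : ℕ) + 1) := rowLen_anti p (by omega)
  have h4 : colLen p ((l' : ℕ) + 1) ≤ colLen p ((l : ℕ) + 1) := colLen_anti p (by omega)
  rw [aP, aP]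
  omega

lemma rowLen_le_box (hbox1 : ∀ x ∈ p.parts, x ≤ (n + 1) / 2) :
    ∀ l, rowLen p (l + 1) ≤ (n + 1) / 2 := by
  intro l
  have h1 : rowLen p (l + 1) ≤ rowLen p 1 := rowLen_anti p (by omega)
  have h2 : rowLen p 1 ≤ (n + 1) / 2 := by
    rw [rowLen]
    calc ((Finset.range (N + 1)).filter (fun m => 1 ≤ colLen p (m + 1))).card
        ≤ (Finset.range ((n + 1) / 2)).card := by
          apply Finset.card_le_card
          intro m hm
          simp only [Finset.mem_filter, Finset.mem_range] at hm ⊢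
          have h3 : (p.parts.filter (fun x => m + 1 ≤ x)).card ≠ 0 := by
            have := hm.2
            rw [colLen] at this
            omega
          obtain ⟨x, hx⟩ := Multiset.card_pos_iff_exists_mem.1
            (show 0 < Multiset.card (p.parts.filter (fun x => m + 1 ≤ x)) from by omega)
          rw [Multiset.mem_filter] at hx
          have := hbox1 x hx.1
          omega
      _ = (n + 1) / 2 := Finset.card_range _
  omega

lemma colLen_le_box (hbox2 : Multiset.card p.parts ≤ n / 2) :
    ∀ l, colLen p (l + 1) ≤ n / 2 := by
  intro l
  have h1 : colLen p (l + 1) ≤ colLen p 1 := colLen_anti p (by omega)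
  rw [colLen_one] at h1
  omega

lemma aP_le_box (h2n : 2 * n₁ ≤ n) (hdur : durfee p = n₁)
    (hbox1 : ∀ x ∈ p.parts, x ≤ (n + 1) / 2) (hbox2 : Multiset.card p.parts ≤ n / 2) :
    ∀ l : Fin n₁, aP (n₁ := n₁) p l ≤ n - 2 * n₁ := by
  intro l
  have h1 := rowLen_le_box p hbox1 (l : ℕ)
  have h3 := colLen_le_box p hbox2 (l : ℕ)
  rw [aP]
  omega

lemma alph_aP (hdur : durfee p = n₁)
    (hrank : ∀ l, 1 ≤ l → l ≤ n₁ → srank p l = 0 ∨ srank p l = 1) :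
    ∀ j, j < n₁ →
      (Aext n₁ (aP (n₁ := n₁) p) j + 1) / 2 = rowLen p (j + 1) - n₁ ∧
        Aext n₁ (aP (n₁ := n₁) p) j / 2 = colLen p (j + 1) - n₁ := by
  intro j hj
  have h1 : Aext n₁ (aP (n₁ := n₁) p) j
      = rowLen p (j + 1) + colLen p (j + 1) - 2 * n₁ := by
    rw [Aext, dif_pos hj]
    rfl
  have h2 := hr_ge p hdur j hj
  have h3 := hc_ge p hdur j hj
  have h4 := hsr p hdur hrank j hj
  rw [h1]
  omega

lemma colLen_eq_dfun (hdur : durfee p = n₁)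
    (hrank : ∀ l, 1 ≤ l → l ≤ n₁ → srank p l = 0 ∨ srank p l = 1) :
    ∀ m, colLen p (m + 1) = dfun n₁ (aP (n₁ := n₁) p) m := by
  intro m
  rcases lt_or_ge m n₁ with hm | hm
  · rw [dfun, mk_lt hm]
    have h1 := alph_aP p hdur hrank m hm
    have h2 := hc_ge p hdur m hm
    omega
  · rw [dfun, mk_ge hm]
    have hfil : (Finset.range n₁).filter
          (fun j => m + 1 - n₁ ≤ (Aext n₁ (aP (n₁ := n₁) p) j + 1) / 2)
        = Finset.range (colLen p (m + 1)) := by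
      ext j
      simp only [Finset.mem_filter, Finset.mem_range]
      constructor
      · rintro ⟨hj, hj2⟩
        have h1 := alph_aP p hdur hrank j hj
        have h2 := hr_ge p hdur j hj
        have h3 : m < rowLen p (j + 1) := by omega
        have h4 := (lt_rowLen_iff p (l := j + 1) (m := m) (by omega)).1 h3
        omega
      · intro hj
        have hcle := hc_le p hdur m hm
        have hjn : j < n₁ := by omega
        have h4 := (lt_rowLen_iff p (l := j + 1) (m := m) (by omega)).2 (by omega)
        have h1 := alph_aP p hdur hrank j hjn
        have h2 := hr_ge p hdur j hjn
        exact ⟨hjn, by omega⟩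
    rw [hfil, Finset.card_range]

lemma sum_aP (hdur : durfee p = n₁)
    (hrank : ∀ l, 1 ≤ l → l ≤ n₁ → srank p l = 0 ∨ srank p l = 1) :
    N = n₁ ^ 2 + ∑ q, aP (n₁ := n₁) p q := by
  have hn₁ : n₁ ≤ N + 1 := by
    rw [← hdur, durfee]
    calc _ ≤ (Finset.range (N + 1)).card := Finset.card_filter_le _ _
    _ = N + 1 := Finset.card_range _
  have h1 := sum_colLen p
  have h2 : ∑ m ∈ Finset.range (N + 1), dfun n₁ (aP (n₁ := n₁) p) m = N :=
    (Finset.sum_congr rfl (fun m _ => (colLen_eq_dfun p hdur hrank m).symm)).trans h1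
  have h2' : ∑ m ∈ Finset.range (n₁ + (N + 1 - n₁)), dfun n₁ (aP (n₁ := n₁) p) m = N := by
    rw [show n₁ + (N + 1 - n₁) = N + 1 from by omega]
    exact h2
  rw [dfun, mk_sum (K := N + 1 - n₁) ?hK] at h2'
  case hK =>
    intro j
    rcases lt_or_ge j n₁ with hj | hj
    · have ha := (alph_aP p hdur hrank j hj).1
      have hr : rowLen p (j + 1) ≤ N + 1 := by
        rw [rowLen]
        calc _ ≤ (Finset.range (N + 1)).card := Finset.card_filter_le _ _
        _ = N + 1 := Finset.card_range _
      omega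
    · rw [Aext_zero n₁ _ hj]
      omega
  have h3 : ∀ j ∈ Finset.range n₁,
      Aext n₁ (aP (n₁ := n₁) p) j / 2 + (Aext n₁ (aP (n₁ := n₁) p) j + 1) / 2
        = Aext n₁ (aP (n₁ := n₁) p) j := by
    intro j _
    omega
  rw [add_assoc, ← Finset.sum_add_distrib, Finset.sum_congr rfl h3, sum_Aext] at h2'
  have : n₁ * n₁ = n₁ ^ 2 := by ring
  omega

end Inverse

end Q32aux

/-- Case `k = 2, i = 2` of the main bijection: partitions
`N = n₁² + a₁ + ⋯ + a_{n₁}` with `n - 2n₁ ≥ a₁ ≥ ⋯ ≥ a_{n₁} ≥ 0` are equinumerous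
with partitions of `N` in a `⌊(n+1)/2⌋ × ⌊n/2⌋` box with exactly `n₁` diagonal
hooks and all successive ranks equal to `0` or `1`. -/
theorem bijection_Q32 (n n₁ N : ℕ) (h : 2 * n₁ ≤ n) :
    Nat.card {a : Fin n₁ → ℕ //
        Antitone a ∧ (∀ p, a p ≤ n - 2 * n₁) ∧ N = n₁ ^ 2 + ∑ p, a p} =
      Nat.card {p : Nat.Partition N //
        (∀ x ∈ p.parts, x ≤ (n + 1) / 2) ∧ Multiset.card p.parts ≤ n / 2 ∧
        durfee p = n₁ ∧
        ∀ l, 1 ≤ l → l ≤ n₁ → srank p l = 0 ∨ srank p l = 1} := by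
  apply Nat.card_congr
  apply Equiv.symm
  refine Equiv.ofBijective (fun p => ⟨Q32aux.aP (n₁ := n₁) p.1,
    Q32aux.aP_anti p.1 p.2.2.2.1,
    Q32aux.aP_le_box p.1 h p.2.2.2.1 p.2.1 p.2.2.1,
    Q32aux.sum_aP p.1 p.2.2.2.1 p.2.2.2.2⟩) ⟨?_, ?_⟩
  · -- injective
    rintro p q hpq
    have hval : Q32aux.aP (n₁ := n₁) p.1 = Q32aux.aP (n₁ := n₁) q.1 :=
      congrArg Subtype.val hpq
    apply Subtype.ext
    apply Q32aux.partition_ext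
    intro m
    rw [Q32aux.colLen_eq_dfun p.1 p.2.2.2.1 p.2.2.2.2 m,
      Q32aux.colLen_eq_dfun q.1 q.2.2.2.1 q.2.2.2.2 m, hval]
  · -- surjective
    rintro ⟨a, ha, hb, hNa⟩
    refine ⟨⟨Q32aux.Pa hNa ha,
      Q32aux.parts_le_Pa hNa ha h hb,
      Q32aux.card_parts_Pa hNa ha h hb,
      Q32aux.durfee_Pa hNa ha,
      Q32aux.srank_Pa hNa ha⟩, ?_⟩
    apply Subtype.ext
    funext l
    show Q32aux.aP (Q32aux.Pa hNa ha) l = a l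
    simp only [Q32aux.aP]
    have hr := Q32aux.rowLen_Pa hNa ha (l : ℕ)
    have hc := Q32aux.colLen_Pa hNa ha (l : ℕ)
    rw [hr, hc, Q32aux.efun, Q32aux.dfun, Q32aux.mk_lt l.isLt, Q32aux.mk_lt l.isLt]
    have hA : Q32aux.Aext n₁ a (l : ℕ) = a l := Q32aux.Aext_eq n₁ a l
    omega
end

section
/- Fix nonnegative integers n, n₁, N with 2n₁ ≤ n−1. The number of partitions of N of the form N = n₁(n₁+1) + a₁ + ⋯ + a_{n₁} with n−2n₁−1 ≥ a₁ ≥ ⋯ ≥ a_{n₁} ≥ 0 equals the number of partitions of N with largest part at most ⌊(n+2)/2⌋, at most ⌊(n−1)/2⌋ parts, exactly n₁ diagonal hooks, and all successive ranks equal to 1 or 2. -/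
section Helpers

lemma part_le_N {N : ℕ} (p : Nat.Partition N) {x : ℕ} (hx : x ∈ p.parts) : x ≤ N := by
  have := Multiset.single_le_sum (fun y hy => Nat.zero_le y) x hx
  simpa [p.parts_sum] using this

lemma card_parts_le_N {N : ℕ} (p : Nat.Partition N) : Multiset.card p.parts ≤ N := by
  have h := Multiset.card_nsmul_le_sum (s := p.parts) (a := 1) (fun x hx => p.parts_pos hx)
  simpa [p.parts_sum] using h

lemma colLen_antitone {N : ℕ} (p : Nat.Partition N) : Antitone (colLen p) := by
  intro k k' hk
  exact Multiset.card_le_card (Multiset.monotone_filter_right _ (fun x hx => le_trans hk hx))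

lemma colLen_le_card {N : ℕ} (p : Nat.Partition N) (k : ℕ) :
    colLen p k ≤ Multiset.card p.parts :=
  Multiset.card_le_card (Multiset.filter_le _ _)

lemma colLen_pos_imp {N : ℕ} (p : Nat.Partition N) {k : ℕ} (hk : 1 ≤ colLen p k) : k ≤ N := by
  obtain ⟨x, hx⟩ := Multiset.card_pos_iff_exists_mem.mp hk
  rw [Multiset.mem_filter] at hx
  exact le_trans hx.2 (part_le_N p hx.1)

/-- A downward-closed filter of a range is a range. -/
lemma filter_range_eq_range {n : ℕ} {q : ℕ → Prop} [DecidablePred q]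
    (hq : ∀ i j, i ≤ j → q j → q i) :
    (Finset.range n).filter q = Finset.range (((Finset.range n).filter q).card) := by
  set S := (Finset.range n).filter q with hS
  ext m
  simp only [Finset.mem_range]
  constructor
  · intro hm
    have hsub : Finset.range (m + 1) ⊆ S := by
      intro j hj
      rw [Finset.mem_range] at hj
      rw [hS, Finset.mem_filter] at hm ⊢
      exact ⟨Finset.mem_range.mpr (lt_of_lt_of_le hj (Nat.succ_le_of_lt (Finset.mem_range.mp hm.1))),
        hq j m (Nat.lt_succ_iff.mp hj) hm.2⟩
    have := Finset.card_le_card hsub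
    simpa using this
  · intro hm
    by_contra hmem
    have hsub : S ⊆ Finset.range m := by
      intro j hj
      rw [Finset.mem_range]
      by_contra hjm
      push_neg at hjm
      rw [hS, Finset.mem_filter] at hj hmem
      exact hmem ⟨Finset.mem_range.mpr (lt_of_le_of_lt hjm (Finset.mem_range.mp hj.1)),
        hq m j hjm hj.2⟩
    have := Finset.card_le_card hsub
    simp at this
    omega

lemma mem_filter_range_iff {n : ℕ} {q : ℕ → Prop} [DecidablePred q]
    (hq : ∀ i j, i ≤ j → q j → q i) (m : ℕ) :
    m ∈ (Finset.range n).filter q ↔ m < ((Finset.range n).filter q).card := by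
  conv_lhs => rw [filter_range_eq_range hq]
  simp

/-- Row/column duality. -/
lemma duality {N : ℕ} (p : Nat.Partition N) {k l : ℕ} (hk : 1 ≤ k) (hl : 1 ≤ l) :
    k ≤ rowLen p l ↔ l ≤ colLen p k := by
  have hdc : ∀ i j, i ≤ j → (fun m => l ≤ colLen p (m + 1)) j → (fun m => l ≤ colLen p (m + 1)) i :=
    fun i j hij hji => le_trans hji (colLen_antitone p (by omega))
  have key := mem_filter_range_iff (n := N + 1) hdc (k - 1)
  rw [Finset.mem_filter, Finset.mem_range] at key
  have hrw : rowLen p l = ((Finset.range (N + 1)).filter (fun m => l ≤ colLen p (m + 1))).card := rfl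
  constructor
  · intro hkr
    have : k - 1 < ((Finset.range (N+1)).filter (fun m => l ≤ colLen p (m + 1))).card := by omega
    have := key.mpr this
    have : l ≤ colLen p (k - 1 + 1) := this.2
    simpa [Nat.sub_add_cancel hk] using this
  · intro hlc
    have hkN : k ≤ N := colLen_pos_imp p (le_trans hl hlc)
    have : k - 1 < N + 1 ∧ l ≤ colLen p (k - 1 + 1) := by
      constructor
      · omega
      · simpa [Nat.sub_add_cancel hk] using hlc
    have := key.mp this
    omega

lemma rowLen_antitone {N : ℕ} (p : Nat.Partition N) : Antitone (rowLen p) := by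
  intro l l' hl
  exact Finset.card_le_card (Finset.monotone_filter_right _ (fun m _ hm => le_trans hl hm))

lemma eq_of_le_iff {x y : ℕ} (h : ∀ k, 1 ≤ k → (k ≤ x ↔ k ≤ y)) : x = y := by
  rcases Nat.eq_zero_or_pos x with hx | hx
  · rcases Nat.eq_zero_or_pos y with hy | hy
    · omega
    · have := (h y hy).mpr le_rfl; omega
  · rcases Nat.eq_zero_or_pos y with hy | hy
    · have := (h x hx).mp le_rfl; omega
    · have h1 := (h x hx).mp le_rfl
      have h2 := (h y hy).mpr le_rfl
      omega

lemma durfee_iff {N : ℕ} (p : Nat.Partition N) (l : ℕ) :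
    (l < N + 1 ∧ l + 1 ≤ rowLen p (l + 1)) ↔ l < durfee p := by
  have hdc : ∀ i j, i ≤ j → (fun m => m + 1 ≤ rowLen p (m + 1)) j →
      (fun m => m + 1 ≤ rowLen p (m + 1)) i := by
    intro i j hij hj
    have := rowLen_antitone p (show i + 1 ≤ j + 1 by omega)
    omega
  have key := mem_filter_range_iff (n := N + 1) hdc l
  rw [Finset.mem_filter, Finset.mem_range] at key
  exact key

/-- countP split -/
lemma countP_succ (s : Multiset ℕ) (v : ℕ) :
    Multiset.countP (fun x => v ≤ x) s = Multiset.count v s + Multiset.countP (fun x => v + 1 ≤ x) s := by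
  induction s using Multiset.induction with
  | empty => simp
  | cons a s ih =>
    rw [Multiset.countP_cons, Multiset.countP_cons, Multiset.count_cons, ih]
    split_ifs <;> omega

lemma parts_ext {N M : ℕ} (p : Nat.Partition N) (q : Nat.Partition M)
    (h : ∀ v, 1 ≤ v → colLen p v = colLen q v) : p.parts = q.parts := by
  have hc : ∀ v, 1 ≤ v → Multiset.countP (fun x => v ≤ x) p.parts
      = Multiset.countP (fun x => v ≤ x) q.parts := by
    intro v hv
    have := h v hv
    unfold colLen at this
    simpa [Multiset.countP_eq_card_filter] using this
  ext v
  rcases Nat.eq_zero_or_pos v with hv | hv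
  · subst hv
    rw [Multiset.count_eq_zero_of_notMem, Multiset.count_eq_zero_of_notMem]
    · intro hmem; exact absurd (q.parts_pos hmem) (lt_irrefl 0)
    · intro hmem; exact absurd (p.parts_pos hmem) (lt_irrefl 0)
  · have h1 := countP_succ p.parts v
    have h2 := countP_succ q.parts v
    have e1 := hc v hv
    have e2 := hc (v + 1) (by omega)
    omega
end Helpers

section AntCount
variable {m : ℕ} (b : Fin m → ℕ)

lemma ant_count_le (t : ℕ) [DecidablePred fun l : Fin m => t ≤ b l] :
    (Finset.univ.filter (fun l : Fin m => t ≤ b l)).card ≤ m := by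
  have := Finset.card_filter_le (Finset.univ : Finset (Fin m)) (fun l => t ≤ b l)
  simpa using this

lemma ant_count_iff (hb : Antitone b) (t : ℕ) {k : ℕ} (hk : k < m) :
    k + 1 ≤ (Finset.univ.filter (fun l : Fin m => t ≤ b l)).card ↔ t ≤ b ⟨k, hk⟩ := by
  constructor
  · intro hcard
    by_contra hbk
    push_neg at hbk
    have hsub : Finset.univ.filter (fun l : Fin m => t ≤ b l) ⊆
        Finset.univ.filter (fun l : Fin m => (l : ℕ) < k) := by
      intro l hl
      rw [Finset.mem_filter] at hl ⊢
      refine ⟨Finset.mem_univ _, ?_⟩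
      by_contra hlk
      push_neg at hlk
      have : b l ≤ b ⟨k, hk⟩ := hb (by exact hlk)
      omega
    have hcard2 := Finset.card_le_card hsub
    have : (Finset.univ.filter (fun l : Fin m => (l : ℕ) < k)).card ≤ k := by
      have hinj : Set.InjOn (fun l : Fin m => (l : ℕ))
          ↑(Finset.univ.filter (fun l : Fin m => (l : ℕ) < k)) := by
        intro x _ y _ hxy; exact Fin.ext hxy
      have := Finset.card_le_card_of_injOn (fun l : Fin m => (l : ℕ))
        (fun l hl => Finset.mem_range.mpr (Finset.mem_filter.mp hl).2) hinj
      simpa using this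
    omega
  · intro hbk
    have hsub : Finset.univ.filter (fun l : Fin m => (l : ℕ) ≤ k) ⊆
        Finset.univ.filter (fun l : Fin m => t ≤ b l) := by
      intro l hl
      rw [Finset.mem_filter] at hl ⊢
      refine ⟨Finset.mem_univ _, ?_⟩
      have : b ⟨k, hk⟩ ≤ b l := hb (by exact hl.2)
      omega
    have hcard := Finset.card_le_card hsub
    have : k + 1 ≤ (Finset.univ.filter (fun l : Fin m => (l : ℕ) ≤ k)).card := by
      have hinj : Function.Injective (fun i : Fin (k+1) => (⟨i, by omega⟩ : Fin m)) := by
        intro x y hxy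
        have : (x : ℕ) = (y : ℕ) := by
          have := congrArg Fin.val hxy
          simpa using this
        exact Fin.ext this
      have hmap : ∀ i : Fin (k+1), (⟨(i:ℕ), by omega⟩ : Fin m) ∈
          Finset.univ.filter (fun l : Fin m => (l : ℕ) ≤ k) := by
        intro i
        rw [Finset.mem_filter]
        exact ⟨Finset.mem_univ _, by simp [Nat.lt_succ_iff.mp i.isLt]⟩
      have := Finset.card_le_card_of_injOn (s := (Finset.univ : Finset (Fin (k+1))))
        (t := Finset.univ.filter (fun l : Fin m => (l : ℕ) ≤ k))
        (fun i : Fin (k+1) => (⟨(i:ℕ), by omega⟩ : Fin m))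
        (fun i _ => hmap i) (fun x _ y _ hxy => hinj hxy)
      simpa using this
    omega
end AntCount

section Construct

variable {n₁ : ℕ} (a : Fin n₁ → ℕ)

/-- The `j`-th row (0-indexed) of the constructed partition. -/
def Rrow (j : ℕ) : ℕ :=
  if h : j < n₁ then n₁ + 1 + (a ⟨j, h⟩ + 1) / 2
  else (Finset.univ.filter (fun l : Fin n₁ => j - n₁ < a l / 2)).card

/-- The parts of the constructed partition. -/
def partsC : Multiset ℕ :=
  ((Finset.range (n₁ + ∑ l, a l)).val.map (Rrow a)).filter (fun x => 0 < x)

lemma partsC_pos : ∀ x ∈ partsC a, 0 < x := by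
  intro x hx
  exact (Multiset.mem_filter.mp hx).2

lemma a_le_sum (l : Fin n₁) : a l ≤ ∑ l', a l' :=
  Finset.single_le_sum (fun i _ => Nat.zero_le (a i)) (Finset.mem_univ l)

lemma partsC_sum : (partsC a).sum = n₁ * (n₁ + 1) + ∑ l, a l := by
  have h0 : (partsC a).sum = ((Finset.range (n₁ + ∑ l, a l)).val.map (Rrow a)).sum := by
    have hsplit := Multiset.sum_filter_add_sum_filter_not
      (s := (Finset.range (n₁ + ∑ l, a l)).val.map (Rrow a)) (fun x => 0 < x)
    have hzero : ((((Finset.range (n₁ + ∑ l, a l)).val.map (Rrow a))).filter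
        (fun x => ¬ 0 < x)).sum = 0 := by
      apply Multiset.sum_eq_zero
      intro x hx
      have := (Multiset.mem_filter.mp hx).2
      omega
    unfold partsC
    omega
  rw [h0]
  have h1 : ((Finset.range (n₁ + ∑ l, a l)).val.map (Rrow a)).sum
      = ∑ j ∈ Finset.range (n₁ + ∑ l, a l), Rrow a j := rfl
  rw [h1]
  rw [Finset.range_eq_Ico, ← Finset.sum_Ico_consecutive (Rrow a) (Nat.zero_le n₁)
    (Nat.le_add_right n₁ _)]
  have h2 : ∑ j ∈ Finset.Ico 0 n₁, Rrow a j = n₁ * (n₁ + 1) + ∑ l, (a l + 1) / 2 := by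
    rw [← Finset.range_eq_Ico, Finset.sum_range fun j => Rrow a j]
    have : ∀ i : Fin n₁, Rrow a i = n₁ + 1 + (a i + 1) / 2 := by
      intro i
      unfold Rrow
      rw [dif_pos i.isLt]
    rw [Finset.sum_congr rfl (fun i _ => this i), Finset.sum_add_distrib]
    simp [Finset.card_univ, mul_comm]
  have h3 : ∑ j ∈ Finset.Ico n₁ (n₁ + ∑ l, a l), Rrow a j = ∑ l, a l / 2 := by
    rw [Finset.sum_Ico_eq_sum_range]
    simp only [Nat.add_sub_cancel_left]
    have hR : ∀ i, Rrow a (n₁ + i) = (Finset.univ.filter (fun l : Fin n₁ => i < a l / 2)).card := by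
      intro i
      unfold Rrow
      rw [dif_neg (by omega)]
      simp only [Nat.add_sub_cancel_left]
    rw [Finset.sum_congr rfl (fun i _ => hR i)]
    have hcf : ∀ i, (Finset.univ.filter (fun l : Fin n₁ => i < a l / 2)).card
        = ∑ l : Fin n₁, if i < a l / 2 then 1 else 0 := by
      intro i
      rw [Finset.card_filter]
    rw [Finset.sum_congr rfl (fun i _ => hcf i), Finset.sum_comm]
    apply Finset.sum_congr rfl
    intro l _
    have hla : a l / 2 ≤ ∑ l', a l' := le_trans (Nat.div_le_self _ _) (a_le_sum a l)
    rw [← Finset.card_filter]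
    have : (Finset.range (∑ l', a l')).filter (fun i => i < a l / 2) = Finset.range (a l / 2) := by
      ext i
      simp only [Finset.mem_filter, Finset.mem_range]
      omega
    rw [this, Finset.card_range]
  have h4 : ∑ l : Fin n₁, ((a l + 1) / 2 + a l / 2) = ∑ l, a l :=
    Finset.sum_congr rfl (fun l _ => by omega)
  rw [Finset.sum_add_distrib] at h4
  omega

/-- The constructed partition. -/
def constructP (N : ℕ) (hN : N = n₁ * (n₁ + 1) + ∑ l, a l) : Nat.Partition N :=
  ⟨partsC a, fun {i} hi => partsC_pos a i hi, by rw [hN, ← partsC_sum a]⟩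

end Construct

section ConstructLemmas

variable {n₁ : ℕ} (a : Fin n₁ → ℕ)

lemma ant_count_iff_lt {m : ℕ} (b : Fin m → ℕ) (hb : Antitone b) (t : ℕ) {k : ℕ} (hk : k < m) :
    k + 1 ≤ (Finset.univ.filter (fun l : Fin m => t < b l)).card ↔ t < b ⟨k, hk⟩ := by
  have heq : Finset.univ.filter (fun l : Fin m => t < b l)
      = Finset.univ.filter (fun l : Fin m => t + 1 ≤ b l) :=
    Finset.filter_congr (fun x _ => by omega)
  rw [heq]
  exact ant_count_iff b hb (t + 1) hk

lemma ant_count_le_lt {m : ℕ} (b : Fin m → ℕ) (t : ℕ) :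
    (Finset.univ.filter (fun l : Fin m => t < b l)).card ≤ m := by
  have := Finset.card_filter_le (Finset.univ : Finset (Fin m)) (fun l : Fin m => t < b l)
  simpa using this

lemma colLen_constructP_eq_card (N : ℕ) (hN : N = n₁ * (n₁ + 1) + ∑ l, a l)
    {v : ℕ} (hv : 1 ≤ v) :
    colLen (constructP a N hN) v
      = ((Finset.range (n₁ + ∑ l, a l)).filter (fun j => v ≤ Rrow a j)).card := by
  show ((partsC a).filter (fun x => v ≤ x)).card = _
  rw [← Multiset.countP_eq_card_filter]
  unfold partsC
  rw [Multiset.countP_filter, Multiset.countP_map]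
  have heq : ((Finset.range (n₁ + ∑ l, a l)).val.filter (fun j => v ≤ Rrow a j ∧ 0 < Rrow a j))
      = ((Finset.range (n₁ + ∑ l, a l)).val.filter (fun j => v ≤ Rrow a j)) := by
    apply Multiset.filter_congr
    intro j _
    constructor
    · exact fun hj => hj.1
    · exact fun hj => ⟨hj, by omega⟩
  rw [heq]
  rfl

lemma colLen_constructP_low (ha : Antitone a) (N : ℕ) (hN : N = n₁ * (n₁ + 1) + ∑ l, a l)
    {v : ℕ} (hv1 : 1 ≤ v) (hv2 : v ≤ n₁) :
    colLen (constructP a N hN) v = n₁ + a ⟨v - 1, by omega⟩ / 2 := by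
  rw [colLen_constructP_eq_card a N hN hv1]
  have hb : Antitone (fun l : Fin n₁ => a l / 2) := fun x y hxy => Nat.div_le_div_right (ha hxy)
  have hk : v - 1 < n₁ := by omega
  have hset : (Finset.range (n₁ + ∑ l, a l)).filter (fun j => v ≤ Rrow a j)
      = Finset.range (n₁ + a ⟨v - 1, hk⟩ / 2) := by
    ext j
    simp only [Finset.mem_filter, Finset.mem_range]
    constructor
    · rintro ⟨hjT, hjv⟩
      by_cases hj : j < n₁
      · omega
      · rw [Rrow, dif_neg hj] at hjv
        have := (ant_count_iff_lt (fun l => a l / 2) hb (j - n₁) hk).mp (by omega)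
        omega
    · intro hj
      have hle : a ⟨v - 1, hk⟩ / 2 ≤ ∑ l, a l :=
        le_trans (Nat.div_le_self _ _) (a_le_sum a _)
      refine ⟨by omega, ?_⟩
      by_cases hjn : j < n₁
      · rw [Rrow, dif_pos hjn]; omega
      · rw [Rrow, dif_neg hjn]
        have := (ant_count_iff_lt (fun l => a l / 2) hb (j - n₁) hk).mpr (by omega)
        omega
  rw [hset, Finset.card_range]

lemma colLen_constructP_high (ha : Antitone a) (N : ℕ) (hN : N = n₁ * (n₁ + 1) + ∑ l, a l)
    {v : ℕ} (hv : n₁ < v) :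
    colLen (constructP a N hN) v
      = (Finset.univ.filter (fun l : Fin n₁ => v ≤ n₁ + 1 + (a l + 1) / 2)).card := by
  rw [colLen_constructP_eq_card a N hN (by omega)]
  apply Finset.card_bij' (fun j hj => (⟨j, by
      rw [Finset.mem_filter] at hj
      by_contra hjn
      push_neg at hjn
      have h2 := hj.2
      rw [Rrow, dif_neg (by omega)] at h2
      have := ant_count_le_lt (fun l : Fin n₁ => a l / 2) (j - n₁)
      omega⟩ : Fin n₁))
    (fun l _ => (l : ℕ))
  · intro j hj
    rw [Finset.mem_filter] at hj ⊢
    refine ⟨Finset.mem_univ _, ?_⟩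
    have h2 := hj.2
    have hjn : j < n₁ := by
      by_contra hjn
      push_neg at hjn
      rw [Rrow, dif_neg (by omega)] at h2
      have := ant_count_le_lt (fun l : Fin n₁ => a l / 2) (j - n₁)
      omega
    rw [Rrow, dif_pos hjn] at h2
    exact h2
  · intro j hj
    rfl
  · intro l hl
    exact Fin.ext rfl
  · intro l hl
    rw [Finset.mem_filter] at hl ⊢
    refine ⟨Finset.mem_range.mpr (by
      have := l.isLt
      omega), ?_⟩
    rw [Rrow, dif_pos l.isLt]
    simpa using hl.2

end ConstructLemmas

section ConstructLemmas2

variable {n₁ : ℕ} (a : Fin n₁ → ℕ)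

lemma rowLen_constructP (ha : Antitone a) (N : ℕ) (hN : N = n₁ * (n₁ + 1) + ∑ l, a l)
    {l : ℕ} (hl1 : 1 ≤ l) (hl2 : l ≤ n₁) :
    rowLen (constructP a N hN) l = n₁ + 1 + (a ⟨l - 1, by omega⟩ + 1) / 2 := by
  have halpha : Antitone (fun x : Fin n₁ => n₁ + 1 + (a x + 1) / 2) := by
    intro x y hxy
    have := ha hxy
    simp only []
    omega
  apply eq_of_le_iff
  intro k hk
  rw [duality _ hk (by omega : 1 ≤ l)]
  by_cases hkn : k ≤ n₁
  · rw [colLen_constructP_low a ha N hN hk hkn]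
    constructor <;> intro <;> omega
  · push_neg at hkn
    rw [colLen_constructP_high a ha N hN hkn]
    have hkk : l - 1 < n₁ := by omega
    have hiff := ant_count_iff (fun x : Fin n₁ => n₁ + 1 + (a x + 1) / 2) halpha k hkk
    rw [show l - 1 + 1 = l by omega] at hiff
    exact hiff

lemma rowLen_constructP_high (ha : Antitone a) (N : ℕ) (hN : N = n₁ * (n₁ + 1) + ∑ l, a l)
    {l : ℕ} (hl : n₁ < l) : rowLen (constructP a N hN) l ≤ n₁ := by
  by_contra hcon
  push_neg at hcon
  have hd := (duality (constructP a N hN) (k := n₁ + 1) (l := l) (by omega) (by omega)).mp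
    (by omega)
  rw [colLen_constructP_high a ha N hN (by omega)] at hd
  have := ant_count_le (fun x : Fin n₁ => n₁ + 1 + (a x + 1) / 2) (n₁ + 1)
  omega

lemma durfee_constructP (ha : Antitone a) (N : ℕ) (hN : N = n₁ * (n₁ + 1) + ∑ l, a l) :
    durfee (constructP a N hN) = n₁ := by
  have hn₁N : n₁ ≤ N := by
    have : n₁ * 1 ≤ n₁ * (n₁ + 1) := Nat.mul_le_mul_left n₁ (by omega)
    omega
  have hiff : ∀ j, j < durfee (constructP a N hN) ↔ j < n₁ := by
    intro j
    rw [← durfee_iff]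
    constructor
    · rintro ⟨hjN, hjr⟩
      by_contra hjn
      push_neg at hjn
      have := rowLen_constructP_high a ha N hN (l := j + 1) (by omega)
      omega
    · intro hj
      refine ⟨by omega, ?_⟩
      rw [rowLen_constructP a ha N hN (by omega : 1 ≤ j + 1) (by omega : j + 1 ≤ n₁)]
      omega
  have h1 := hiff n₁
  have h2 := hiff (durfee (constructP a N hN))
  omega

lemma srank_constructP (ha : Antitone a) (N : ℕ) (hN : N = n₁ * (n₁ + 1) + ∑ l, a l)
    {l : ℕ} (hl1 : 1 ≤ l) (hl2 : l ≤ n₁) :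
    srank (constructP a N hN) l = 1 ∨ srank (constructP a N hN) l = 2 := by
  unfold srank
  rw [rowLen_constructP a ha N hN hl1 hl2, colLen_constructP_low a ha N hN hl1 hl2]
  have hmod : (a ⟨l - 1, by omega⟩ + 1) / 2 + a ⟨l - 1, by omega⟩ / 2 = a ⟨l - 1, by omega⟩ := by
    omega
  rcases Nat.even_or_odd (a ⟨l - 1, by omega⟩) with he | ho
  · left
    have : (a ⟨l - 1, by omega⟩ + 1) / 2 = a ⟨l - 1, by omega⟩ / 2 := by
      obtain ⟨c, hc⟩ := he; omega
    rw [this]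
    push_cast
    ring
  · right
    have : (a ⟨l - 1, by omega⟩ + 1) / 2 = a ⟨l - 1, by omega⟩ / 2 + 1 := by
      obtain ⟨c, hc⟩ := ho; omega
    rw [this]
    push_cast
    ring

lemma fin_count_lt {m c : ℕ} (hc : c ≤ m) :
    (Finset.univ.filter (fun l : Fin m => (l : ℕ) < c)).card = c := by
  conv_rhs => rw [← Finset.card_range c]
  refine Finset.card_bij' (s := Finset.univ.filter (fun l : Fin m => (l : ℕ) < c))
    (t := Finset.range c) (fun l _ => (l : ℕ)) (fun j hj => (⟨j, by
    rw [Finset.mem_range] at hj; omega⟩ : Fin m)) ?_ ?_ ?_ ?_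
  · intro l hl
    rw [Finset.mem_filter] at hl
    exact Finset.mem_range.mpr hl.2
  · intro j hj
    rw [Finset.mem_range] at hj
    exact Finset.mem_filter.mpr ⟨Finset.mem_univ _, hj⟩
  · intro l hl
    exact Fin.ext rfl
  · intro j hj
    rfl

end ConstructLemmas2

section PartitionFacts

lemma colLen_one {N : ℕ} (p : Nat.Partition N) : colLen p 1 = Multiset.card p.parts := by
  unfold colLen
  congr 1
  exact Multiset.filter_eq_self.mpr (fun x hx => p.parts_pos hx)

lemma rowLen_le {N : ℕ} (p : Nat.Partition N) (l : ℕ) : rowLen p l ≤ N + 1 := by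
  have := Finset.card_filter_le (Finset.range (N + 1)) (fun m => l ≤ colLen p (m + 1))
  simpa [rowLen] using this

lemma rowLen_one_le {N : ℕ} (p : Nat.Partition N) {B : ℕ} (hbox : ∀ x ∈ p.parts, x ≤ B) :
    rowLen p 1 ≤ B := by
  rcases Nat.eq_zero_or_pos (rowLen p 1) with h0 | h0
  · omega
  · have h1 : 1 ≤ colLen p (rowLen p 1) := (duality p h0 le_rfl).mp le_rfl
    obtain ⟨x, hx⟩ := Multiset.card_pos_iff_exists_mem.mp h1
    rw [Multiset.mem_filter] at hx
    exact le_trans hx.2 (hbox x hx.1)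

end PartitionFacts


def Fmap (n n₁ N : ℕ)
    (hbox' : ∀ (a : Fin n₁ → ℕ), (∀ p, a p ≤ n - 2 * n₁ - 1) →
      ∀ (hN : N = n₁ * (n₁ + 1) + ∑ p, a p),
      ∀ x ∈ (constructP a N hN).parts, x ≤ (n + 2) / 2)
    (hcard' : ∀ (a : Fin n₁ → ℕ), Antitone a → (∀ p, a p ≤ n - 2 * n₁ - 1) →
      ∀ (hN : N = n₁ * (n₁ + 1) + ∑ p, a p),
      Multiset.card (constructP a N hN).parts ≤ (n - 1) / 2) :
    {a : Fin n₁ → ℕ //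
        Antitone a ∧ (∀ p, a p ≤ n - 2 * n₁ - 1) ∧ N = n₁ * (n₁ + 1) + ∑ p, a p} →
      {p : Nat.Partition N //
        (∀ x ∈ p.parts, x ≤ (n + 2) / 2) ∧ Multiset.card p.parts ≤ (n - 1) / 2 ∧
        durfee p = n₁ ∧
        ∀ l, 1 ≤ l → l ≤ n₁ → srank p l = 1 ∨ srank p l = 2} :=
  fun s => ⟨constructP s.1 N s.2.2.2,
    hbox' s.1 s.2.2.1 s.2.2.2, hcard' s.1 s.2.1 s.2.2.1 s.2.2.2,
    durfee_constructP s.1 s.2.1 N s.2.2.2,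
    fun l hl1 hl2 => srank_constructP s.1 s.2.1 N s.2.2.2 hl1 hl2⟩

set_option maxHeartbeats 1000000 in
/-- Case `k = 2, i = 1` of the main bijection: partitions
`N = n₁(n₁+1) + a₁ + ⋯ + a_{n₁}` with `n - 2n₁ - 1 ≥ a₁ ≥ ⋯ ≥ a_{n₁} ≥ 0` are
equinumerous with partitions of `N` in a `⌊(n+2)/2⌋ × ⌊(n-1)/2⌋` box with exactly
`n₁` diagonal hooks and all successive ranks equal to `1` or `2`. -/
theorem bijection_Q41 (n n₁ N : ℕ) (h : 2 * n₁ ≤ n - 1) :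
    Nat.card {a : Fin n₁ → ℕ //
        Antitone a ∧ (∀ p, a p ≤ n - 2 * n₁ - 1) ∧ N = n₁ * (n₁ + 1) + ∑ p, a p} =
      Nat.card {p : Nat.Partition N //
        (∀ x ∈ p.parts, x ≤ (n + 2) / 2) ∧ Multiset.card p.parts ≤ (n - 1) / 2 ∧
        durfee p = n₁ ∧
        ∀ l, 1 ≤ l → l ≤ n₁ → srank p l = 1 ∨ srank p l = 2} := by
  have hbox' : ∀ (a : Fin n₁ → ℕ), (∀ p, a p ≤ n - 2 * n₁ - 1) →
      ∀ (hN : N = n₁ * (n₁ + 1) + ∑ p, a p),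
      ∀ x ∈ (constructP a N hN).parts, x ≤ (n + 2) / 2 := by
    intro a hb hN x hx
    have hx' : x ∈ partsC a := hx
    obtain ⟨hmem, hpos⟩ := Multiset.mem_filter.mp hx'
    obtain ⟨j, hj, rfl⟩ := Multiset.mem_map.mp hmem
    by_cases hjn : j < n₁
    · have hbj := hb ⟨j, hjn⟩
      rw [Rrow, dif_pos hjn]
      omega
    · rw [Rrow, dif_neg hjn]
      have := ant_count_le_lt (fun l : Fin n₁ => a l / 2) (j - n₁)
      omega
  have hcard' : ∀ (a : Fin n₁ → ℕ), Antitone a → (∀ p, a p ≤ n - 2 * n₁ - 1) →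
      ∀ (hN : N = n₁ * (n₁ + 1) + ∑ p, a p),
      Multiset.card (constructP a N hN).parts ≤ (n - 1) / 2 := by
    intro a ha hb hN
    rcases Nat.eq_zero_or_pos n₁ with h0 | h0
    · subst h0
      show Multiset.card (partsC a) ≤ _
      unfold partsC
      simp
    · rw [← colLen_one, colLen_constructP_low a ha N hN le_rfl h0]
      have := hb ⟨1 - 1, by omega⟩
      omega
  refine Nat.card_eq_of_bijective (Fmap n n₁ N hbox' hcard') ⟨?_, ?_⟩
  · -- injectivity
    intro s t hst
    apply Subtype.ext
    funext l
    have hq : constructP s.1 N s.2.2.2 = constructP t.1 N t.2.2.2 :=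
      congrArg Subtype.val hst
    have hv1 : 1 ≤ (l : ℕ) + 1 := by omega
    have hv2 : (l : ℕ) + 1 ≤ n₁ := by have := l.isLt; omega
    have e1 : n₁ + s.1 ⟨(l : ℕ) + 1 - 1, by omega⟩ / 2
        = n₁ + t.1 ⟨(l : ℕ) + 1 - 1, by omega⟩ / 2 :=
      (colLen_constructP_low s.1 s.2.1 N s.2.2.2 hv1 hv2).symm.trans
        ((congrArg (fun q => colLen q ((l : ℕ) + 1)) hq).trans
          (colLen_constructP_low t.1 t.2.1 N t.2.2.2 hv1 hv2))
    have e2 : n₁ + 1 + (s.1 ⟨(l : ℕ) + 1 - 1, by omega⟩ + 1) / 2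
        = n₁ + 1 + (t.1 ⟨(l : ℕ) + 1 - 1, by omega⟩ + 1) / 2 :=
      (rowLen_constructP s.1 s.2.1 N s.2.2.2 hv1 hv2).symm.trans
        ((congrArg (fun q => rowLen q ((l : ℕ) + 1)) hq).trans
          (rowLen_constructP t.1 t.2.1 N t.2.2.2 hv1 hv2))
    simp only [Nat.add_sub_cancel, Fin.eta] at e1 e2
    omega
  · -- surjectivity
    rintro ⟨p, hbox, hcard, hdurf, hrank⟩
    have hrowhigh : ∀ l, n₁ < l → rowLen p l ≤ n₁ := by
      intro l hl
      have h1 : ¬ (n₁ < durfee p) := by omega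
      rw [← durfee_iff] at h1
      push_neg at h1
      have hle : rowLen p (n₁ + 1) ≤ n₁ := by
        by_cases hnN : n₁ < N + 1
        · have := h1 hnN
          omega
        · have := rowLen_le p (n₁ + 1)
          omega
      exact le_trans (rowLen_antitone p (by omega : n₁ + 1 ≤ l)) hle
    have hrowlow : ∀ l, 1 ≤ l → l ≤ n₁ → n₁ ≤ rowLen p l ∧ n₁ ≤ colLen p l := by
      intro l h1 h2
      have hn₁ : n₁ - 1 < durfee p := by omega
      rw [← durfee_iff, show n₁ - 1 + 1 = n₁ from by omega] at hn₁
      have hrown₁ : n₁ ≤ rowLen p n₁ := by have := hn₁.2; omega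
      refine ⟨le_trans hrown₁ (rowLen_antitone p h2), ?_⟩
      exact (duality p h1 (by omega : 1 ≤ n₁)).mp (le_trans h2 hrown₁)
    have hcolhigh : ∀ v, n₁ < v → colLen p v ≤ n₁ := by
      intro v hv
      by_contra hc
      push_neg at hc
      have hd := (duality p (by omega : 1 ≤ v) (by omega : 1 ≤ n₁ + 1)).mpr (by omega)
      have := hrowhigh (n₁ + 1) (by omega)
      omega
    have hrank' : ∀ l, 1 ≤ l → l ≤ n₁ →
        rowLen p l = colLen p l + 1 ∨ rowLen p l = colLen p l + 2 := by
      intro l h1 h2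
      rcases hrank l h1 h2 with hs | hs <;> unfold srank at hs
      · left; omega
      · right; omega
    set a : Fin n₁ → ℕ :=
      fun l => rowLen p ((l : ℕ) + 1) + colLen p ((l : ℕ) + 1) - (2 * n₁ + 1) with ha_def
    have ha : Antitone a := by
      intro x y hxy
      have hr := rowLen_antitone p (show (x : ℕ) + 1 ≤ (y : ℕ) + 1 by
        have : (x : ℕ) ≤ y := hxy; omega)
      have hc := colLen_antitone p (show (x : ℕ) + 1 ≤ (y : ℕ) + 1 by
        have : (x : ℕ) ≤ y := hxy; omega)
      simp only [ha_def]
      omega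
    have hbnd : ∀ l, a l ≤ n - 2 * n₁ - 1 := by
      intro l
      have hr1 : rowLen p ((l : ℕ) + 1) ≤ rowLen p 1 := rowLen_antitone p (by omega)
      have hr2 : rowLen p 1 ≤ (n + 2) / 2 := rowLen_one_le p hbox
      have hc1 : colLen p ((l : ℕ) + 1) ≤ (n - 1) / 2 :=
        le_trans (colLen_le_card p _) hcard
      have hl := l.isLt
      simp only [ha_def]
      omega
    have hmatch : ∀ v, 1 ≤ v →
        colLen p v = colLen (constructP a (n₁ * (n₁ + 1) + ∑ l, a l) rfl) v := by
      intro v hv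
      by_cases hvn : v ≤ n₁
      · rw [colLen_constructP_low a ha _ rfl hv hvn]
        have hfin : v - 1 < n₁ := by omega
        have hav : a ⟨v - 1, hfin⟩ = rowLen p v + colLen p v - (2 * n₁ + 1) := by
          simp only [ha_def]
          rw [show v - 1 + 1 = v from by omega]
        rw [hav]
        have hh1 := hrank' v hv hvn
        have hh2 := hrowlow v hv hvn
        omega
      · push_neg at hvn
        rw [colLen_constructP_high a ha _ rfl hvn]
        have hset : Finset.univ.filter (fun l : Fin n₁ => v ≤ n₁ + 1 + (a l + 1) / 2)
            = Finset.univ.filter (fun l : Fin n₁ => (l : ℕ) < colLen p v) := by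
          apply Finset.filter_congr
          intro l _
          have hlt := l.isLt
          have hrowfor : n₁ + 1 + (a l + 1) / 2 = rowLen p ((l : ℕ) + 1) := by
            have h1 := hrank' ((l : ℕ) + 1) (by omega) (by omega)
            have h2 := hrowlow ((l : ℕ) + 1) (by omega) (by omega)
            simp only [ha_def]
            omega
          rw [hrowfor]
          constructor
          · intro hvr
            have := (duality p (by omega : 1 ≤ v) (by omega : 1 ≤ (l : ℕ) + 1)).mp hvr
            omega
          · intro hlt2
            exact (duality p (by omega : 1 ≤ v) (by omega : 1 ≤ (l : ℕ) + 1)).mpr (by omega)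
        rw [hset, fin_count_lt (hcolhigh v hvn)]
    have hparts : p.parts = partsC a :=
      parts_ext p (constructP a (n₁ * (n₁ + 1) + ∑ l, a l) rfl) hmatch
    have hNs : N = n₁ * (n₁ + 1) + ∑ l, a l := by
      have h1 := p.parts_sum
      have h2 : (partsC a).sum = n₁ * (n₁ + 1) + ∑ l, a l := partsC_sum a
      rw [hparts] at h1
      omega
    exact ⟨⟨a, ha, hbnd, hNs⟩, Subtype.ext (Nat.Partition.ext hparts.symm)⟩
end

section
/- As formal power series, for 1 ≤ i ≤ k: (1/(q)_∞) ∑_{r∈ℤ} (-1)^r q^{r((2k+1)r+2k-2i+1)/2} = ∑_{n₁ ≥ ⋯ ≥ n_{k-1} ≥ 0} q^{n₁²+⋯+n_{k-1}² + n_i+⋯+n_{k-1}} / ((q)_{n₁-n₂} ⋯ (q)_{n_{k-2}-n_{k-1}} (q)_{n_{k-1}}). -/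
open PowerSeries Finset

noncomputable section AGaux

abbrev R := PowerSeries ℚ

/-- `(q)_m` -/
noncomputable def P (m : ℕ) : R := ∏ j ∈ Finset.range m, (1 - (PowerSeries.X : R) ^ (j+1))

/-- partial product `∏_{j=a+1}^{b} (1-q^j)` (indices `j = a+1..b`). -/
noncomputable def Pf (a b : ℕ) : R := ∏ j ∈ Finset.Ico a b, (1 - (PowerSeries.X : R) ^ (j+1))

lemma P_eq_Pf (m : ℕ) : P m = Pf 0 m := by
  rw [P, Pf, Finset.range_eq_Ico]

lemma Pf_mul (a b c : ℕ) (h1 : a ≤ b) (h2 : b ≤ c) : Pf a b * Pf b c = Pf a c := by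
  simp [Pf, Finset.prod_Ico_consecutive _ h1 h2]

lemma P_split (a b : ℕ) (h : a ≤ b) : P b = P a * Pf a b := by
  rw [P_eq_Pf, P_eq_Pf, Pf_mul 0 a b (Nat.zero_le _) h]

lemma P_succ (m : ℕ) : P (m+1) = P m * (1 - (PowerSeries.X : R)^(m+1)) := by
  simp [P, Finset.prod_range_succ]

lemma constCoeff_P (m : ℕ) : constantCoeff (R := ℚ) (P m) = 1 := by
  induction m with
  | zero => simp [P]
  | succ n ih => rw [P_succ, map_mul, ih]; simp

lemma P_ne (m : ℕ) : constantCoeff (R := ℚ) (P m) ≠ 0 := by rw [constCoeff_P]; norm_num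

lemma P_mul_inv (m : ℕ) : P m * (P m)⁻¹ = 1 := PowerSeries.mul_inv_cancel _ (P_ne m)

lemma P_inv_mul (m : ℕ) : (P m)⁻¹ * P m = 1 := by rw [mul_comm]; exact P_mul_inv m

/-- tail bound: `X^(a+1) ∣ Pf a b - 1`. -/
lemma Pf_sub_one_dvd (a b : ℕ) : (PowerSeries.X : R)^(a+1) ∣ Pf a b - 1 := by
  induction b with
  | zero =>
    have : Finset.Ico a 0 = ∅ := by simp
    simp [Pf, this]
  | succ n ih =>
    rcases le_or_gt a n with h' | h'
    · have : Pf a (n+1) = Pf a n * (1 - X^(n+1)) := by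
        simp [Pf, Finset.prod_Ico_succ_top h']
      rw [this]
      have : Pf a n * (1 - X^(n+1)) - 1
          = (Pf a n - 1) - Pf a n * X^(n+1) := by ring
      rw [this]
      refine dvd_sub ih (Dvd.dvd.mul_left ?_ _)
      exact pow_dvd_pow _ (by omega)
    · rcases le_or_gt (n+1) a with h2 | h2
      · have : Finset.Ico a (n+1) = ∅ := by
          apply Finset.Ico_eq_empty; omega
        simp [Pf, this]
      · have hae : a = n := by omega
        subst hae
        have hico : Finset.Ico a (a+1) = {a} := by ext x; simp only [Finset.mem_Ico, Finset.mem_singleton]; omega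
        rw [Pf, hico, Finset.prod_singleton]
        have : (1 - (X:R)^(a+1)) - 1 = -(X^(a+1)) := by ring
        rw [this]
        exact (dvd_neg).2 dvd_rfl

/-- congruence mod X^(d+1) -/
def MD (d : ℕ) (A B : R) : Prop := (PowerSeries.X : R)^(d+1) ∣ A - B

lemma MD.rfl {d : ℕ} {A : R} : MD d A A := by simp [MD]

lemma MD.symm {d : ℕ} {A B : R} (h : MD d A B) : MD d B A := by
  have : B - A = -(A - B) := by ring
  rw [MD, this]; exact (dvd_neg).2 h

lemma MD.trans {d : ℕ} {A B C : R} (h1 : MD d A B) (h2 : MD d B C) : MD d A C := by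
  have : A - C = (A - B) + (B - C) := by ring
  rw [MD, this]; exact dvd_add h1 h2

lemma MD.mul_right {d : ℕ} {A B : R} (h : MD d A B) (C : R) : MD d (A * C) (B * C) := by
  have : A * C - B * C = (A - B) * C := by ring
  rw [MD, this]; exact Dvd.dvd.mul_right h C

lemma MD.mul_left {d : ℕ} {A B : R} (h : MD d A B) (C : R) : MD d (C * A) (C * B) := by
  have : C * A - C * B = (A - B) * C := by ring
  rw [MD, this]; exact Dvd.dvd.mul_right h C

lemma MD.mul {d : ℕ} {A B A' B' : R} (h : MD d A B) (h' : MD d A' B') :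
    MD d (A * A') (B * B') := (h.mul_right A').trans (h'.mul_left B)

lemma MD.sum {d : ℕ} {α : Type*} (s : Finset α) (f g : α → R)
    (h : ∀ a ∈ s, MD d (f a) (g a)) : MD d (∑ a ∈ s, f a) (∑ a ∈ s, g a) := by
  rw [MD, ← Finset.sum_sub_distrib]
  exact Finset.dvd_sum h

lemma MD.coeff_eq {d : ℕ} {A B : R} (h : MD d A B) (j : ℕ) (hj : j ≤ d) :
    coeff (R := ℚ) j A = coeff (R := ℚ) j B := by
  have := (PowerSeries.X_pow_dvd_iff).1 h j (by omega)
  rw [map_sub] at this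
  linarith

lemma MD.of_dvd_left {d : ℕ} {A : R} (h : (PowerSeries.X : R)^(d+1) ∣ A) : MD d A 0 := by
  simpa [MD] using h

/-- inverse of something ≡ 1 is ≡ 1 -/
lemma MD.inv_one {d : ℕ} {A : R} (hu : constantCoeff (R := ℚ) A ≠ 0) (h : MD d A 1) :
    MD d A⁻¹ 1 := by
  have h1 : A⁻¹ - 1 = A⁻¹ * (1 - A) + (A⁻¹ * A - 1) := by ring
  rw [MD, h1, PowerSeries.inv_mul_cancel _ hu]
  have : MD d (1:R) A := h.symm
  have h2 : (PowerSeries.X : R)^(d+1) ∣ (1 - A) := this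
  simpa using (h2.mul_left A⁻¹)

lemma MD_X_pow_mul {d : ℕ} (E : ℕ) (hE : d < E) (C : R) : MD d ((PowerSeries.X : R)^E * C) 0 := by
  apply MD.of_dvd_left
  exact Dvd.dvd.mul_right (pow_dvd_pow _ (by omega)) C

/-- `Pf a b ≡ 1` when `d ≤ a`. -/
lemma MD_Pf_one {d a b : ℕ} (h : d ≤ a) : MD d (Pf a b) 1 := by
  rw [MD]
  exact dvd_trans (pow_dvd_pow _ (by omega)) (Pf_sub_one_dvd a b)

lemma constCoeff_Pf (a b : ℕ) : constantCoeff (R := ℚ) (Pf a b) = 1 := by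
  have h := Pf_sub_one_dvd a b
  have := (PowerSeries.X_pow_dvd_iff).1 h 0 (by omega)
  rw [map_sub] at this
  simpa using sub_eq_zero.mp (by simpa using this)


-- Part B

lemma P_zero : P 0 = 1 := by simp [P]
lemma P_zero_inv : (P 0)⁻¹ = 1 := by
  have := P_mul_inv 0; rwa [P_zero, one_mul] at this
lemma P_nonzero (m : ℕ) : P m ≠ 0 := fun h => P_ne m (by rw [h]; simp)

lemma Pf_inv (a b : ℕ) (h : a ≤ b) : Pf a b * (P b)⁻¹ = (P a)⁻¹ := by
  have hs : P b = P a * Pf a b := P_split a b h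
  have : (P a)⁻¹ * (P b * (P b)⁻¹) = (P a)⁻¹ := by rw [P_mul_inv, mul_one]
  calc Pf a b * (P b)⁻¹ = (P a)⁻¹ * P a * (Pf a b * (P b)⁻¹) := by rw [P_inv_mul, one_mul]
    _ = (P a)⁻¹ * (P b * (P b)⁻¹) := by rw [hs]; ring
    _ = (P a)⁻¹ := this

/-- Gaussian binomial as power series, 0 out of range -/
noncomputable def Bn (L m : ℕ) : R :=
  if m ≤ L then P L * (P m)⁻¹ * (P (L - m))⁻¹ else 0

lemma Bn_zero (L : ℕ) : Bn L 0 = 1 := by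
  rw [Bn, if_pos (Nat.zero_le _), P_zero_inv]
  simp [P_mul_inv]

lemma Bn_self (L : ℕ) : Bn L L = 1 := by
  rw [Bn, if_pos le_rfl, Nat.sub_self, P_zero_inv, mul_one, P_mul_inv]

lemma Bn_out {L m : ℕ} (h : L < m) : Bn L m = 0 := by
  rw [Bn, if_neg (by omega)]

lemma pascal (L m : ℕ) (h : m ≤ L) :
    Bn (L+1) (m+1) = Bn L (m+1) + (PowerSeries.X : R)^(L-m) * Bn L m := by
  rcases Nat.lt_or_ge m L with hlt | hge
  · -- m < L
    have h1 : m + 1 ≤ L + 1 := by omega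
    have h2 : m + 1 ≤ L := hlt
    have e1 : L + 1 - (m+1) = L - m := by omega
    have e2 : L - m = (L - (m+1)) + 1 := by omega
    apply mul_right_cancel₀ (b := P (m+1) * P (L-m))
      (mul_ne_zero (P_nonzero _) (P_nonzero _))
    rw [Bn, if_pos h1, Bn, if_pos h2, Bn, if_pos h]
    rw [e1]
    have lhs : P (L+1) * (P (m+1))⁻¹ * (P (L-m))⁻¹ * (P (m+1) * P (L-m))
        = P (L+1) * ((P (m+1))⁻¹ * P (m+1)) * ((P (L-m))⁻¹ * P (L-m)) := by ring
    rw [lhs, P_inv_mul, P_inv_mul, mul_one, mul_one]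
    have hP1 : P (L-m) = P (L - (m+1)) * (1 - X^(L-m)) := by
      rw [e2, P_succ, ← e2]
    have hPm : P (m+1) = P m * (1 - X^(m+1)) := P_succ m
    have rhs : (P L * (P (m+1))⁻¹ * (P (L-(m+1)))⁻¹ + X^(L-m) * (P L * (P m)⁻¹ * (P (L-m))⁻¹))
        * (P (m+1) * P (L-m))
        = P L * ((P (m+1))⁻¹ * P (m+1)) * ((P (L-(m+1)))⁻¹ * (P (L - (m+1)) * (1 - X^(L-m))))
          + X^(L-m) * (P L * ((P m)⁻¹ * (P m * (1 - X^(m+1)))) * ((P (L-m))⁻¹ * P (L-m))) := by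
      rw [← hP1, ← hPm]; ring
    rw [rhs, P_inv_mul, ← mul_assoc ((P (L-(m+1)))⁻¹), P_inv_mul, ← mul_assoc ((P m)⁻¹),
        P_inv_mul, P_inv_mul]
    rw [P_succ]
    have e4 : (PowerSeries.X : R)^(L-m) * X^(m+1) = X^(L+1) := by
      rw [← pow_add]; congr 1; omega
    linear_combination (P L) * e4
  · -- m = L
    have : m = L := by omega
    subst this
    rw [Bn_self, Bn_self, Bn_out (by omega), Nat.sub_self]
    simp

lemma Psum (L : ℕ) : ∀ s : ℕ,
    ∑ m ∈ Finset.range (L+1),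
      (PowerSeries.X : R)^(m*(m+s)) * Bn L m * Pf (m+s) (L+s) = 1 := by
  induction L with
  | zero =>
    intro s
    simp [Bn_zero, Pf]
  | succ L ih =>
    intro s
    rw [Finset.sum_range_succ']
    have term0 : (PowerSeries.X : R)^(0*(0+s)) * Bn (L+1) 0 * Pf (0+s) (L+1+s)
        = Pf s (L+1+s) := by
      rw [Bn_zero]; simp
    rw [term0]
    have split : ∀ m ∈ Finset.range (L+1),
        (PowerSeries.X : R)^((m+1)*((m+1)+s)) * Bn (L+1) (m+1) * Pf ((m+1)+s) (L+1+s)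
        = (PowerSeries.X : R)^((m+1)*((m+1)+s)) * Bn L (m+1) * Pf ((m+1)+s) (L+1+s)
          + (PowerSeries.X : R)^(L+s+1) *
            ((PowerSeries.X : R)^(m*(m+(s+1))) * Bn L m * Pf (m+(s+1)) (L+(s+1))) := by
      intro m hm
      have hmL : m ≤ L := by simp at hm; omega
      rw [pascal L m hmL]
      have eexp : (m+1)*((m+1)+s) + (L-m) = (L+s+1) + m*(m+(s+1)) := by
        obtain ⟨c, rfl⟩ : ∃ c, L = m + c := ⟨L - m, by omega⟩
        have : m + c - m = c := by omega
        rw [this]; ring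
      have : (PowerSeries.X : R)^((m+1)*((m+1)+s)) * (X^(L-m) * Bn L m)
          = (PowerSeries.X : R)^(L+s+1) * ((PowerSeries.X : R)^(m*(m+(s+1))) * Bn L m) := by
        rw [← mul_assoc, ← pow_add, eexp, pow_add, mul_assoc]
      have e2 : (m+1)+s = m + (s+1) := by omega
      have e3 : L+1+s = L + (s+1) := by omega
      rw [mul_add, this, e2, e3]
      ring
    rw [Finset.sum_congr rfl split, Finset.sum_add_distrib, ← Finset.mul_sum, ih (s+1),
       mul_one]
    -- now handle the first sum: reindex
    have reidx : ∑ m ∈ Finset.range (L+1),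
        (PowerSeries.X : R)^((m+1)*((m+1)+s)) * Bn L (m+1) * Pf ((m+1)+s) (L+1+s)
        = ∑ m ∈ Finset.range (L+2),
            (PowerSeries.X : R)^(m*(m+s)) * Bn L m * Pf (m+s) (L+1+s)
          - Pf s (L+1+s) := by
      rw [Finset.sum_range_succ' (fun m => (PowerSeries.X : R)^(m*(m+s)) * Bn L m * Pf (m+s) (L+1+s)) (L+1)]
      rw [Bn_zero]
      simp
    rw [reidx]
    have cuttop : ∑ m ∈ Finset.range (L+2),
        (PowerSeries.X : R)^(m*(m+s)) * Bn L m * Pf (m+s) (L+1+s)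
        = ∑ m ∈ Finset.range (L+1),
            (PowerSeries.X : R)^(m*(m+s)) * Bn L m * Pf (m+s) (L+1+s) := by
      rw [Finset.sum_range_succ, Bn_out (by omega)]
      simp
    rw [cuttop]
    have peel : ∀ m ∈ Finset.range (L+1),
        (PowerSeries.X : R)^(m*(m+s)) * Bn L m * Pf (m+s) (L+1+s)
        = ((PowerSeries.X : R)^(m*(m+s)) * Bn L m * Pf (m+s) (L+s)) * (1 - X^(L+s+1)) := by
      intro m hm
      have hmL : m ≤ L := by simp at hm; omega
      have : Pf (m+s) (L+1+s) = Pf (m+s) (L+s) * (1 - X^(L+s+1)) := by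
        have h1 : m + s ≤ L + s := by omega
        have : Finset.Ico (m+s) (L+1+s) = insert (L+s) (Finset.Ico (m+s) (L+s)) := by
          ext x
          simp only [Finset.mem_Ico, Finset.mem_insert]
          omega
        rw [Pf, this, Finset.prod_insert (by simp), Pf]
        ring
      rw [this]; ring
    rw [Finset.sum_congr rfl peel, ← Finset.sum_mul, ih s, one_mul]
    ring

/-- Key kernel lemma -/
lemma KER (L s : ℕ) :
    ∑ m ∈ Finset.range (L+1),
      (PowerSeries.X : R)^(m*(m+s)) * ((P (L-m))⁻¹ * ((P m)⁻¹ * (P (m+s))⁻¹))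
      = (P L)⁻¹ * (P (L+s))⁻¹ := by
  have h := Psum L s
  have : ∀ m ∈ Finset.range (L+1),
      (PowerSeries.X : R)^(m*(m+s)) * Bn L m * Pf (m+s) (L+s) * ((P L)⁻¹ * (P (L+s))⁻¹)
      = (PowerSeries.X : R)^(m*(m+s)) * ((P (L-m))⁻¹ * ((P m)⁻¹ * (P (m+s))⁻¹)) := by
    intro m hm
    have hmL : m ≤ L := by simp at hm; omega
    rw [Bn, if_pos hmL]
    have h1 : Pf (m+s) (L+s) * (P (L+s))⁻¹ = (P (m+s))⁻¹ := Pf_inv _ _ (by omega)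
    calc (PowerSeries.X : R)^(m*(m+s)) * (P L * (P m)⁻¹ * (P (L-m))⁻¹) * Pf (m+s) (L+s)
          * ((P L)⁻¹ * (P (L+s))⁻¹)
        = (PowerSeries.X : R)^(m*(m+s)) * ((P L)⁻¹ * P L) * (P m)⁻¹ * (P (L-m))⁻¹
          * (Pf (m+s) (L+s) * (P (L+s))⁻¹) := by ring
      _ = (PowerSeries.X : R)^(m*(m+s)) * ((P (L-m))⁻¹ * ((P m)⁻¹ * (P (m+s))⁻¹)) := by
          rw [P_inv_mul, h1]; ring
  rw [← Finset.sum_congr rfl this, ← Finset.sum_mul, h, one_mul]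




-- Part C : signs, integer exponents, D0/D1
def sg (r : ℤ) : ℚ := (-1 : ℚ) ^ r

lemma sg_add (a b : ℤ) : sg (a+b) = sg a * sg b := by
  rw [sg, sg, sg, zpow_add₀ (by norm_num : (-1:ℚ) ≠ 0)]

lemma sg_sq (r : ℤ) : sg r * sg r = 1 := by
  rw [← sg_add, sg]
  have : r + r = 2 * r := by ring
  rw [this, zpow_mul]
  norm_num

lemma sg_neg (r : ℤ) : sg (-r) = sg r := by
  have h1 : sg (-r) * sg r = 1 := by rw [← sg_add]; simp [sg]
  have h2 := sg_sq r
  have := h1.trans h2.symm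
  exact mul_right_cancel₀ (fun h => by rw [h, mul_zero] at h2; norm_num at h2) this

lemma sg_flip (r : ℤ) : sg (-r-1) = -sg r := by
  have : -r-1 = -r + (-1) := by ring
  rw [this, sg_add, sg_neg]
  have : sg (-1) = -1 := by
    have h1 : sg (-1) * sg 1 = 1 := by rw [← sg_add]; simp [sg]
    have h2 : sg 1 = -1 := by simp [sg]
    rw [h2] at h1
    linarith [h1]
  rw [this]; ring

lemma sg_natCast (n : ℕ) : sg (n:ℤ) = (-1:ℚ)^n := by
  rw [sg, zpow_natCast]

/-- triangular number -/
def TT (r : ℤ) : ℤ := r * (r+1) / 2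

lemma TT_twice (r : ℤ) : 2 * TT r = r * (r+1) := by
  rw [TT]
  exact Int.mul_ediv_cancel' (even_iff_two_dvd.mp (Int.even_mul_succ_self r))

lemma TT_nonneg (r : ℤ) : 0 ≤ TT r := by
  have h : 0 ≤ r * (r+1) := by nlinarith [sq_nonneg (2*r+1)]
  rw [TT]
  exact Int.ediv_nonneg h (by norm_num)

lemma TT_reflect (r : ℤ) : TT (-r-1) = TT r := by
  have h := TT_twice r
  have h2 := TT_twice (-r-1)
  have : (-r-1) * ((-r-1)+1) = r * (r+1) := by ring
  omega

def Xp (e : ℤ) : R := (PowerSeries.X : R) ^ e.toNat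

lemma Xp_add {a b : ℤ} (ha : 0 ≤ a) (hb : 0 ≤ b) : Xp (a+b) = Xp a * Xp b := by
  rw [Xp, Xp, Xp, ← pow_add]
  congr 1
  omega

lemma Xp_zero : Xp 0 = 1 := by simp [Xp]

lemma Xp_natCast (n : ℕ) : Xp (n:ℤ) = (PowerSeries.X:R)^n := by simp [Xp]

/-- basis `1/((q)_{M-r} (q)_{M+r})` -/
noncomputable def D0 (M : ℕ) (r : ℤ) : R :=
  if -(M:ℤ) ≤ r ∧ r ≤ M then (P ((M:ℤ) - r).toNat)⁻¹ * (P ((M:ℤ) + r).toNat)⁻¹ else 0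

/-- basis `1/((q)_{M-r} (q)_{M+r+1})` -/
noncomputable def D1 (M : ℕ) (r : ℤ) : R :=
  if -(M:ℤ)-1 ≤ r ∧ r ≤ M then (P ((M:ℤ) - r).toNat)⁻¹ * (P ((M:ℤ) + r + 1).toNat)⁻¹ else 0

lemma D0_out {M : ℕ} {r : ℤ} (h : ¬(-(M:ℤ) ≤ r ∧ r ≤ M)) : D0 M r = 0 := if_neg h

lemma D1_out {M : ℕ} {r : ℤ} (h : ¬(-(M:ℤ)-1 ≤ r ∧ r ≤ M)) : D1 M r = 0 := if_neg h

lemma D0_symm (M : ℕ) (r : ℤ) : D0 M (-r) = D0 M r := by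
  rw [D0, D0]
  by_cases h : -(M:ℤ) ≤ r ∧ r ≤ M
  · rw [if_pos (by omega), if_pos h]
    have e1 : ((M:ℤ) - -r) = (M:ℤ) + r := by ring
    have e2 : ((M:ℤ) + -r) = (M:ℤ) - r := by ring
    rw [e1, e2, mul_comm]
  · rw [if_neg (by omega), if_neg h]

lemma D1_symm (M : ℕ) (r : ℤ) : D1 M (-r-1) = D1 M r := by
  rw [D1, D1]
  by_cases h : -(M:ℤ)-1 ≤ r ∧ r ≤ M
  · rw [if_pos (by omega), if_pos h]
    have e1 : ((M:ℤ) - (-r-1)) = (M:ℤ) + r + 1 := by ring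
    have e2 : ((M:ℤ) + (-r-1) + 1) = (M:ℤ) - r := by ring
    rw [e1, e2, mul_comm]
  · rw [if_neg (by omega), if_neg h]

lemma P_inv_succ (b : ℕ) : (P (b+1))⁻¹ = (P b)⁻¹ + (PowerSeries.X:R)^(b+1) * (P (b+1))⁻¹ := by
  apply mul_right_cancel₀ (b := P b * P (b+1)) (mul_ne_zero (P_nonzero _) (P_nonzero _))
  have l : (P (b+1))⁻¹ * (P b * P (b+1)) = P b * ((P (b+1))⁻¹ * P (b+1)) := by ring
  have r1 : ((P b)⁻¹ + (PowerSeries.X:R)^(b+1) * (P (b+1))⁻¹) * (P b * P (b+1))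
      = ((P b)⁻¹ * P b) * P (b+1) + (PowerSeries.X:R)^(b+1) * ((P (b+1))⁻¹ * P (b+1)) * P b := by
    ring
  rw [l, r1, P_inv_mul, P_inv_mul, P_succ b]
  ring

lemma P_inv_pred (a : ℕ) : (1 - (PowerSeries.X:R)^(a+1)) * (P (a+1))⁻¹ = (P a)⁻¹ := by
  apply mul_right_cancel₀ (b := P a * P (a+1)) (mul_ne_zero (P_nonzero _) (P_nonzero _))
  have l : (1 - (PowerSeries.X:R)^(a+1)) * (P (a+1))⁻¹ * (P a * P (a+1))
      = (1 - (PowerSeries.X:R)^(a+1)) * P a * ((P (a+1))⁻¹ * P (a+1)) := by ring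
  have r1 : (P a)⁻¹ * (P a * P (a+1)) = ((P a)⁻¹ * P a) * P (a+1) := by ring
  rw [l, r1, P_inv_mul, P_inv_mul, mul_one, one_mul, P_succ a]
  ring

/-- termwise: D1 = D0 + q^{M+r+1} D1 inside the D1 range -/
lemma D1_eq_D0_add {M : ℕ} {r : ℤ} (h1 : -(M:ℤ)-1 ≤ r) (h2 : r ≤ M) :
    D1 M r = D0 M r + Xp ((M:ℤ) + r + 1) * D1 M r := by
  rcases eq_or_lt_of_le h1 with he | hlt
  · -- r = -M-1
    rw [D0_out (by omega)]
    have : ((M:ℤ) + r + 1) = 0 := by omega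
    rw [this, Xp_zero, zero_add, one_mul]
  · -- -M ≤ r
    have hin0 : -(M:ℤ) ≤ r := by omega
    rw [D1, if_pos ⟨h1, h2⟩, D0, if_pos ⟨hin0, h2⟩]
    set b : ℕ := ((M:ℤ) + r).toNat with hb
    have e1 : ((M:ℤ) + r + 1).toNat = b + 1 := by omega
    have e2 : Xp ((M:ℤ) + r + 1) = (PowerSeries.X:R)^(b+1) := by
      rw [Xp, e1]
    rw [e1, e2]
    linear_combination ((P ((M:ℤ) - r).toNat)⁻¹) * (P_inv_succ b)

/-- termwise: (1 - q^{M+1-r}) D0 (M+1) r = D1 M r, valid on the full D0 (M+1) range -/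
lemma D0_succ_eq_D1 {M : ℕ} {r : ℤ} (h1 : -(M:ℤ)-1 ≤ r) (h2 : r ≤ (M:ℤ)+1) :
    (1 - Xp ((M:ℤ) + 1 - r)) * D0 (M+1) r = D1 M r := by
  rcases eq_or_lt_of_le h2 with he | hlt
  · -- r = M+1 : both sides zero
    have hz : ((M:ℤ) + 1 - r) = 0 := by omega
    rw [D1_out (by omega), hz, Xp_zero, sub_self, zero_mul]
  · have h2' : r ≤ (M:ℤ) := by omega
    have hD0 : D0 (M+1) r = (P (((M:ℤ)+1) - r).toNat)⁻¹ * (P (((M:ℤ)+1) + r).toNat)⁻¹ := by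
      rw [D0, if_pos (by push_cast; omega)]
      norm_cast
    rw [hD0, D1, if_pos ⟨h1, h2'⟩]
    set a : ℕ := ((M:ℤ) - r).toNat with ha
    have e1 : (((M:ℤ)+1) - r).toNat = a + 1 := by omega
    have e2 : (((M:ℤ)+1) + r).toNat = ((M:ℤ) + r + 1).toNat := by omega
    have e3 : Xp ((M:ℤ) + 1 - r) = (PowerSeries.X:R)^(a+1) := by
      have : ((M:ℤ) + 1 - r).toNat = a + 1 := by omega
      rw [Xp, this]
    rw [e1, e2, e3, ← mul_assoc, P_inv_pred a]

-- Part D : integer-indexed kernels and the pentagonal base lemma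
lemma toNat_sq (a : ℕ) : (((a:ℤ))^2).toNat = a^2 := by
  have : ((a:ℤ))^2 = ((a^2 : ℕ) : ℤ) := by push_cast; ring
  rw [this, Int.toNat_natCast]

lemma K1_nat (M a : ℕ) :
    ∑ n ∈ Finset.range (M+1), (PowerSeries.X:R)^(n^2) * (P (M-n))⁻¹ * D0 n (a:ℤ)
      = Xp ((a:ℤ)^2) * D0 M (a:ℤ) := by
  rcases Nat.lt_or_ge M a with hMa | haM
  · rw [D0_out (by push_cast; omega), mul_zero]
    apply Finset.sum_eq_zero
    intro n hn
    simp only [Finset.mem_range] at hn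
    rw [D0_out (by push_cast; omega), mul_zero]
  · have hsub : Finset.Ico a (M+1) ⊆ Finset.range (M+1) := by
      intro x hx; simp only [Finset.mem_Ico] at hx; simp only [Finset.mem_range]; omega
    rw [← Finset.sum_subset hsub (by
      intro x hx hx2
      simp only [Finset.mem_range] at hx
      simp only [Finset.mem_Ico] at hx2
      rw [D0_out (by push_cast; omega), mul_zero])]
    rw [Finset.sum_Ico_eq_sum_range]
    have e0 : M + 1 - a = (M - a) + 1 := by omega
    rw [e0]
    have hterm : ∀ i ∈ Finset.range ((M-a)+1),
        (PowerSeries.X:R)^((a+i)^2) * (P (M-(a+i)))⁻¹ * D0 (a+i) (a:ℤ)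
        = Xp ((a:ℤ)^2) * ((PowerSeries.X:R)^(i*(i+2*a)) * ((P ((M-a)-i))⁻¹ * ((P i)⁻¹ * (P (i+2*a))⁻¹))) := by
      intro i hi
      simp only [Finset.mem_range] at hi
      have hD : D0 (a+i) (a:ℤ) = (P i)⁻¹ * (P (i+2*a))⁻¹ := by
        rw [D0, if_pos (by push_cast; omega)]
        have e1 : ((↑(a+i):ℤ) - a).toNat = i := by push_cast; omega
        have e2 : ((↑(a+i):ℤ) + a).toNat = i + 2*a := by push_cast; omega
        rw [e1, e2]
      have e3 : M - (a+i) = (M-a) - i := by omega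
      have e4 : (a+i)^2 = a^2 + i*(i+2*a) := by ring
      rw [hD, e3, e4, pow_add, Xp, toNat_sq]
      ring
    rw [Finset.sum_congr rfl hterm, ← Finset.mul_sum, KER (M-a) (2*a)]
    have hD : D0 M (a:ℤ) = (P (M-a))⁻¹ * (P ((M-a)+2*a))⁻¹ := by
      rw [D0, if_pos (by push_cast; omega)]
      have e1 : ((M:ℤ) - a).toNat = M - a := by omega
      have e2 : ((M:ℤ) + a).toNat = (M-a) + 2*a := by omega
      rw [e1, e2]
    rw [hD]

lemma K1 (M : ℕ) (r : ℤ) :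
    ∑ n ∈ Finset.range (M+1), (PowerSeries.X:R)^(n^2) * (P (M-n))⁻¹ * D0 n r
      = Xp (r^2) * D0 M r := by
  obtain ⟨a, rfl | rfl⟩ := r.eq_nat_or_neg
  · exact K1_nat M a
  · have hsq : (-(a:ℤ))^2 = ((a:ℤ))^2 := by ring
    calc ∑ n ∈ Finset.range (M+1), (PowerSeries.X:R)^(n^2) * (P (M-n))⁻¹ * D0 n (-(a:ℤ))
        = ∑ n ∈ Finset.range (M+1), (PowerSeries.X:R)^(n^2) * (P (M-n))⁻¹ * D0 n (a:ℤ) := by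
          apply Finset.sum_congr rfl; intro n _; rw [D0_symm]
      _ = Xp ((a:ℤ)^2) * D0 M (a:ℤ) := K1_nat M a
      _ = Xp ((-(a:ℤ))^2) * D0 M (-(a:ℤ)) := by rw [hsq, D0_symm]

lemma K2_nat (M a : ℕ) :
    ∑ n ∈ Finset.range (M+1), (PowerSeries.X:R)^(n^2+n) * (P (M-n))⁻¹ * D1 n (a:ℤ)
      = Xp ((a:ℤ)^2+a) * D1 M (a:ℤ) := by
  rcases Nat.lt_or_ge M a with hMa | haM
  · rw [D1_out (by push_cast; omega), mul_zero]
    apply Finset.sum_eq_zero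
    intro n hn
    simp only [Finset.mem_range] at hn
    rw [D1_out (by push_cast; omega), mul_zero]
  · have hsub : Finset.Ico a (M+1) ⊆ Finset.range (M+1) := by
      intro x hx; simp only [Finset.mem_Ico] at hx; simp only [Finset.mem_range]; omega
    rw [← Finset.sum_subset hsub (by
      intro x hx hx2
      simp only [Finset.mem_range] at hx
      simp only [Finset.mem_Ico] at hx2
      rw [D1_out (by push_cast; omega), mul_zero])]
    rw [Finset.sum_Ico_eq_sum_range]
    have e0 : M + 1 - a = (M - a) + 1 := by omega
    rw [e0]
    have hterm : ∀ i ∈ Finset.range ((M-a)+1),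
        (PowerSeries.X:R)^((a+i)^2+(a+i)) * (P (M-(a+i)))⁻¹ * D1 (a+i) (a:ℤ)
        = Xp ((a:ℤ)^2+a) * ((PowerSeries.X:R)^(i*(i+(2*a+1))) * ((P ((M-a)-i))⁻¹ * ((P i)⁻¹ * (P (i+(2*a+1)))⁻¹))) := by
      intro i hi
      simp only [Finset.mem_range] at hi
      have hD : D1 (a+i) (a:ℤ) = (P i)⁻¹ * (P (i+(2*a+1)))⁻¹ := by
        rw [D1, if_pos (by push_cast; omega)]
        have e1 : ((↑(a+i):ℤ) - a).toNat = i := by push_cast; omega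
        have e2 : ((↑(a+i):ℤ) + a + 1).toNat = i + (2*a+1) := by push_cast; omega
        rw [e1, e2]
      have e3 : M - (a+i) = (M-a) - i := by omega
      have e4 : (a+i)^2+(a+i) = (a^2+a) + i*(i+(2*a+1)) := by ring
      have e5 : Xp ((a:ℤ)^2+a) = (PowerSeries.X:R)^(a^2+a) := by
        have : ((a:ℤ)^2+a).toNat = a^2+a := by
          have : ((a:ℤ))^2 + a = ((a^2+a : ℕ) : ℤ) := by push_cast; ring
          rw [this, Int.toNat_natCast]
        rw [Xp, this]
      rw [hD, e3, e4, pow_add, e5]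
      ring
    rw [Finset.sum_congr rfl hterm, ← Finset.mul_sum, KER (M-a) (2*a+1)]
    have hD : D1 M (a:ℤ) = (P (M-a))⁻¹ * (P ((M-a)+(2*a+1)))⁻¹ := by
      rw [D1, if_pos (by push_cast; omega)]
      have e1 : ((M:ℤ) - a).toNat = M - a := by omega
      have e2 : ((M:ℤ) + a + 1).toNat = (M-a) + (2*a+1) := by omega
      rw [e1, e2]
    rw [hD]

lemma K2 (M : ℕ) (r : ℤ) :
    ∑ n ∈ Finset.range (M+1), (PowerSeries.X:R)^(n^2+n) * (P (M-n))⁻¹ * D1 n r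
      = Xp (r^2+r) * D1 M r := by
  rcases le_or_gt 0 r with hr | hr
  · obtain ⟨a, rfl⟩ : ∃ a : ℕ, r = a := ⟨r.toNat, by omega⟩
    exact K2_nat M a
  · obtain ⟨a, rfl⟩ : ∃ a : ℕ, r = -(a:ℤ)-1 := ⟨(-r-1).toNat, by omega⟩
    have hsq : (-(a:ℤ)-1)^2 + (-(a:ℤ)-1) = ((a:ℤ))^2 + a := by ring
    calc ∑ n ∈ Finset.range (M+1), (PowerSeries.X:R)^(n^2+n) * (P (M-n))⁻¹ * D1 n (-(a:ℤ)-1)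
        = ∑ n ∈ Finset.range (M+1), (PowerSeries.X:R)^(n^2+n) * (P (M-n))⁻¹ * D1 n (a:ℤ) := by
          apply Finset.sum_congr rfl; intro n _; rw [D1_symm]
      _ = Xp ((a:ℤ)^2+a) * D1 M (a:ℤ) := K2_nat M a
      _ = Xp ((-(a:ℤ)-1)^2 + (-(a:ℤ)-1)) * D1 M (-(a:ℤ)-1) := by rw [hsq, D1_symm]

/-- pairing cancellation for D1 sums with exponent `a·TT r + c` -/
lemma pair_cancel (M : ℕ) (a c : ℤ) :
    ∑ r ∈ Finset.Icc (-(M:ℤ)-1) (M:ℤ),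
      PowerSeries.C (R := ℚ) (sg r) * Xp (a * TT r + c) * D1 M r = 0 := by
  refine Finset.sum_involution (fun r _ => -r-1) ?_ ?_ ?_ ?_
  · intro r hr
    have e1 : sg (-r-1) = -sg r := sg_flip r
    have e2 : TT (-r-1) = TT r := TT_reflect r
    have e3 : D1 M (-r-1) = D1 M r := D1_symm M r
    rw [e1, e2, e3, map_neg]
    ring
  · intro r hr h
    intro hcon
    have hcon2 : -r-1 = r := hcon
    omega
  · intro r hr
    simp only [Finset.mem_Icc] at hr ⊢
    omega
  · intro r hr
    ring

-- Part E1 : the base identity  X1 M = (P M)⁻¹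
noncomputable def X1 (M : ℕ) : R :=
  ∑ r ∈ Finset.Icc (-(M:ℤ)) (M:ℤ), PowerSeries.C (R := ℚ) (sg r) * Xp (r^2 + TT r) * D0 M r

noncomputable def Y1 (M : ℕ) : R :=
  ∑ r ∈ Finset.Icc (-(M:ℤ)-1) (M:ℤ), PowerSeries.C (R := ℚ) (sg r) * Xp (r^2 + TT r) * D1 M r

lemma rho_nonneg (r : ℤ) : 0 ≤ r^2 + TT r := by
  have := TT_nonneg r
  nlinarith [sq_nonneg r]

lemma Y1_eq_X1 (M : ℕ) : Y1 M = X1 M := by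
  have hterm : ∀ r ∈ Finset.Icc (-(M:ℤ)-1) (M:ℤ),
      PowerSeries.C (R := ℚ) (sg r) * Xp (r^2 + TT r) * D1 M r
      = PowerSeries.C (R := ℚ) (sg r) * Xp (r^2 + TT r) * D0 M r
        + PowerSeries.C (R := ℚ) (sg r) * Xp (3 * TT r + ((M:ℤ)+1)) * D1 M r := by
    intro r hr
    simp only [Finset.mem_Icc] at hr
    have he : Xp (r^2 + TT r) * Xp ((M:ℤ) + r + 1) = Xp (3 * TT r + ((M:ℤ)+1)) := by
      have hexp : r^2 + TT r + ((M:ℤ)+r+1) = 3 * TT r + ((M:ℤ)+1) := by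
        linear_combination -TT_twice r
      rw [← Xp_add (rho_nonneg r) (by omega : (0:ℤ) ≤ (M:ℤ)+r+1), hexp]
    conv_lhs => rw [D1_eq_D0_add hr.1 hr.2]
    linear_combination (PowerSeries.C (R := ℚ) (sg r)) * (D1 M r) * he
  rw [Y1, Finset.sum_congr rfl hterm, Finset.sum_add_distrib, pair_cancel M 3 ((M:ℤ)+1),
    add_zero]
  rw [X1]
  symm
  apply Finset.sum_subset
  · intro x hx
    simp only [Finset.mem_Icc] at hx ⊢
    omega
  · intro x hx hx2
    simp only [Finset.mem_Icc] at hx hx2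
    rw [D0_out (by omega), mul_zero]

lemma X1_succ (M : ℕ) : X1 (M+1) =
    ∑ r ∈ Finset.Icc (-(M:ℤ)-1) ((M:ℤ)+1),
      PowerSeries.C (R := ℚ) (sg r) * Xp (r^2 + TT r) * D0 (M+1) r := by
  rw [X1]
  have h1 : (-(((M:ℕ)+1 : ℕ)):ℤ) = -(M:ℤ)-1 := by push_cast; ring
  have h2 : ((((M:ℕ)+1 : ℕ)):ℤ) = (M:ℤ)+1 := by push_cast; ring
  rw [h1, h2]

lemma Y1_eq_X1succ (M : ℕ) : Y1 M = X1 (M+1) - (PowerSeries.X:R)^(M+1) * X1 (M+1) := by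
  have hext : Y1 M = ∑ r ∈ Finset.Icc (-(M:ℤ)-1) ((M:ℤ)+1),
      PowerSeries.C (R := ℚ) (sg r) * Xp (r^2 + TT r) * D1 M r := by
    rw [Y1]
    apply Finset.sum_subset
    · intro x hx; simp only [Finset.mem_Icc] at hx ⊢; omega
    · intro x hx hx2
      simp only [Finset.mem_Icc] at hx hx2
      rw [D1_out (by omega), mul_zero]
  have hterm : ∀ r ∈ Finset.Icc (-(M:ℤ)-1) ((M:ℤ)+1),
      PowerSeries.C (R := ℚ) (sg r) * Xp (r^2 + TT r) * D1 M r
      = PowerSeries.C (R := ℚ) (sg r) * Xp (r^2 + TT r) * D0 (M+1) r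
        - PowerSeries.C (R := ℚ) (sg r) * (Xp (r^2 + TT r) * Xp ((M:ℤ)+1-r)) * D0 (M+1) r := by
    intro r hr
    simp only [Finset.mem_Icc] at hr
    rw [← D0_succ_eq_D1 hr.1 hr.2]
    ring
  rw [hext, Finset.sum_congr rfl hterm, Finset.sum_sub_distrib]
  rw [← X1_succ]
  congr 1
  -- second sum equals X^{M+1} * X1 (M+1) via r ↦ -r
  rw [X1_succ, Finset.mul_sum]
  refine Finset.sum_nbij' (fun r => -r) (fun r => -r) ?_ ?_ ?_ ?_ ?_
  · intro r hr; simp only [Finset.mem_Icc] at hr ⊢; omega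
  · intro r hr; simp only [Finset.mem_Icc] at hr ⊢; omega
  · intro r _; ring
  · intro r _; ring
  · intro r hr
    simp only [Finset.mem_Icc] at hr
    rw [sg_neg, D0_symm]
    have e1 : Xp (r^2 + TT r) * Xp ((M:ℤ)+1-r) = Xp (r^2 + TT (-r) + ((M:ℤ)+1)) := by
      have h5 : 2 * TT r = r^2 + r := by linear_combination TT_twice r
      have h6 : 2 * TT (-r) = r^2 - r := by linear_combination TT_twice (-r)
      have hexp : r^2 + TT r + ((M:ℤ)+1-r) = r^2 + TT (-r) + ((M:ℤ)+1) := by omega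
      rw [← Xp_add (rho_nonneg r) (by omega : (0:ℤ) ≤ (M:ℤ)+1-r), hexp]
    have e2 : Xp (r^2 + TT (-r) + ((M:ℤ)+1)) = Xp ((-r)^2 + TT (-r)) * (PowerSeries.X:R)^(M+1) := by
      have hnn : (0:ℤ) ≤ (M:ℤ)+1 := by omega
      rw [show r^2 + TT (-r) + ((M:ℤ)+1) = ((-r)^2 + TT (-r)) + ((M:ℤ)+1) by ring,
        Xp_add (rho_nonneg (-r)) hnn]
      have ht : (((M:ℤ)+1)).toNat = M+1 := by omega
      simp only [Xp, ht]
    rw [e1, e2]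
    ring

lemma lemA (M : ℕ) : X1 M = (P M)⁻¹ := by
  induction M with
  | zero =>
    rw [X1]
    have : Finset.Icc (-(0:ℤ)) (0:ℤ) = {0} := by decide
    rw [show ((0:ℕ):ℤ) = (0:ℤ) by norm_num, this, Finset.sum_singleton]
    rw [show sg 0 = 1 by simp [sg], show ((0:ℤ)^2 + TT 0) = 0 by decide, Xp_zero]
    rw [D0, if_pos (by omega)]
    simp [P_zero_inv, P_zero]
  | succ M ih =>
    have h1 : (P M)⁻¹ = (1 - (PowerSeries.X:R)^(M+1)) * X1 (M+1) := by
      rw [← ih, ← Y1_eq_X1, Y1_eq_X1succ]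
      ring
    have hinv : P (M+1) * X1 (M+1) = 1 := by
      calc P (M+1) * X1 (M+1) = P M * ((1 - (PowerSeries.X:R)^(M+1)) * X1 (M+1)) := by
            rw [P_succ]; ring
        _ = P M * (P M)⁻¹ := by rw [← h1]
        _ = 1 := P_mul_inv M
    calc X1 (M+1) = (P (M+1))⁻¹ * (P (M+1) * X1 (M+1)) := by
          rw [← mul_assoc, P_inv_mul, one_mul]
      _ = (P (M+1))⁻¹ := by rw [hinv, mul_one]

-- Part E2 : the Bailey-type chain
noncomputable def Phi (kk : ℕ) : ℕ → ℕ → R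
  | 0, M => (P M)⁻¹
  | (t+1), M => ∑ n ∈ Finset.range (M+1),
      (PowerSeries.X:R)^(n^2 + (if t < kk then n else 0)) * (P (M-n))⁻¹ * Phi kk t n

lemma Phi_zero (kk M : ℕ) : Phi kk 0 M = (P M)⁻¹ := rfl

lemma Phi_succ (kk t M : ℕ) : Phi kk (t+1) M = ∑ n ∈ Finset.range (M+1),
      (PowerSeries.X:R)^(n^2 + (if t < kk then n else 0)) * (P (M-n))⁻¹ * Phi kk t n := rfl

lemma TT2 (r : ℤ) : 2 * TT r = r^2 + r := by linear_combination TT_twice r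

lemma expo_nonneg (a b r : ℤ) (ha : 0 ≤ a) (hb : 0 ≤ b) : 0 ≤ a * r^2 + b * TT r := by
  nlinarith [TT_nonneg r, sq_nonneg r]

lemma sq_add_self_nonneg (r : ℤ) : (0:ℤ) ≤ r^2 + r := by
  have := TT2 r
  have := TT_nonneg r
  omega

/-- stage sums in the D1 basis, for t ≤ κ -/
lemma chainD1 (kk : ℕ) : ∀ t, t ≤ kk → ∀ M : ℕ,
    Phi kk t M = ∑ r ∈ Finset.Icc (-(M:ℤ)-1) (M:ℤ),
      PowerSeries.C (R := ℚ) (sg r) * Xp (r^2 + (2*t+1) * TT r) * D1 M r := by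
  intro t
  induction t with
  | zero =>
    intro _ M
    rw [Phi_zero, ← lemA, ← Y1_eq_X1, Y1]
    apply Finset.sum_congr rfl
    intro r _
    norm_num
  | succ t ih =>
    intro ht M
    have ht' : t ≤ kk := by omega
    have hif : (if t < kk then 1 else 0) = 1 := if_pos (by omega)
    rw [Phi_succ]
    have hterm : ∀ n ∈ Finset.range (M+1),
        (PowerSeries.X:R)^(n^2 + (if t < kk then n else 0)) * (P (M-n))⁻¹ * Phi kk t n
        = ∑ r ∈ Finset.Icc (-(M:ℤ)-1) (M:ℤ),
            PowerSeries.C (R := ℚ) (sg r) * Xp (r^2 + (2*t+1) * TT r) *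
              ((PowerSeries.X:R)^(n^2+n) * (P (M-n))⁻¹ * D1 n r) := by
      intro n hn
      simp only [Finset.mem_range] at hn
      rw [if_pos (by omega : t < kk), ih ht' n, Finset.mul_sum]
      have hsub : Finset.Icc (-(n:ℤ)-1) (n:ℤ) ⊆ Finset.Icc (-(M:ℤ)-1) (M:ℤ) := by
        intro x hx; simp only [Finset.mem_Icc] at hx ⊢; omega
      rw [Finset.sum_subset hsub (by
        intro x hx hx2
        simp only [Finset.mem_Icc] at hx hx2
        rw [D1_out (by omega)]
        ring)]
      apply Finset.sum_congr rfl
      intro r _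
      ring
    rw [Finset.sum_congr rfl hterm, Finset.sum_comm]
    apply Finset.sum_congr rfl
    intro r hr
    rw [← Finset.mul_sum, K2 M r]
    have he : Xp (r^2 + (2*(t:ℤ)+1) * TT r) * Xp (r^2+r) = Xp (r^2 + (2*((t:ℤ)+1)+1) * TT r) := by
      have h5 := TT2 r
      have hexp : (r^2 + (2*(t:ℤ)+1) * TT r) + (r^2+r) = r^2 + (2*((t:ℤ)+1)+1) * TT r := by
        have h6 : (2*((t:ℤ)+1)+1) * TT r = (2*(t:ℤ)+1) * TT r + 2 * TT r := by ring
        omega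
      have hnn1 : (0:ℤ) ≤ r^2 + (2*(t:ℤ)+1) * TT r := by
        have := expo_nonneg 1 (2*(t:ℤ)+1) r (by omega) (by omega); linarith [this]
      rw [← Xp_add hnn1 (sq_add_self_nonneg r), hexp]
    have hc : (2 * (((t+1):ℕ):ℤ) + 1) = 2*((t:ℤ)+1)+1 := by push_cast; ring
    rw [hc, ← he]
    ring

/-- after the junction: stage sums in the D0 basis -/
lemma chainD0 (kk : ℕ) : ∀ s : ℕ, ∀ M : ℕ,
    Phi kk (kk + s) M = ∑ r ∈ Finset.Icc (-(M:ℤ)) (M:ℤ),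
      PowerSeries.C (R := ℚ) (sg r) * Xp ((s+1) * r^2 + (2*kk+1) * TT r) * D0 M r := by
  intro s
  induction s with
  | zero =>
    intro M
    rw [Nat.add_zero, chainD1 kk kk le_rfl M]
    have hterm : ∀ r ∈ Finset.Icc (-(M:ℤ)-1) (M:ℤ),
        PowerSeries.C (R := ℚ) (sg r) * Xp (r^2 + (2*kk+1) * TT r) * D1 M r
        = PowerSeries.C (R := ℚ) (sg r) * Xp (r^2 + (2*kk+1) * TT r) * D0 M r
          + PowerSeries.C (R := ℚ) (sg r) * Xp ((2*kk+3) * TT r + ((M:ℤ)+1)) * D1 M r := by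
      intro r hr
      simp only [Finset.mem_Icc] at hr
      have he : Xp (r^2 + (2*kk+1) * TT r) * Xp ((M:ℤ) + r + 1)
          = Xp ((2*kk+3) * TT r + ((M:ℤ)+1)) := by
        have h5 := TT2 r
        have hexp : (r^2 + (2*kk+1) * TT r) + ((M:ℤ)+r+1)
            = (2*kk+3) * TT r + ((M:ℤ)+1) := by
          have : ((2:ℤ)*kk+3) * TT r = (2*kk+1) * TT r + 2 * TT r := by ring
          omega
        have hnn1 : (0:ℤ) ≤ r^2 + (2*(kk:ℤ)+1) * TT r := by
          have := expo_nonneg 1 (2*(kk:ℤ)+1) r (by omega) (by omega); linarith [this]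
        rw [← Xp_add hnn1 (by omega : (0:ℤ) ≤ (M:ℤ)+r+1), hexp]
      conv_lhs => rw [D1_eq_D0_add hr.1 hr.2]
      linear_combination (PowerSeries.C (R := ℚ) (sg r)) * (D1 M r) * he
    rw [Finset.sum_congr rfl hterm, Finset.sum_add_distrib, pair_cancel M (2*kk+3) ((M:ℤ)+1),
      add_zero]
    have h1 : ∑ r ∈ Finset.Icc (-(M:ℤ)) (M:ℤ),
        PowerSeries.C (R := ℚ) (sg r) * Xp (((0:ℕ)+1) * r^2 + (2*kk+1) * TT r) * D0 M r
        = ∑ r ∈ Finset.Icc (-(M:ℤ)) (M:ℤ),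
        PowerSeries.C (R := ℚ) (sg r) * Xp (r^2 + (2*kk+1) * TT r) * D0 M r := by
      apply Finset.sum_congr rfl
      intro r _
      have : (((0:ℕ):ℤ)+1) * r^2 + (2*kk+1) * TT r = r^2 + (2*kk+1) * TT r := by push_cast; ring
      rw [this]
    rw [h1]
    symm
    apply Finset.sum_subset
    · intro x hx; simp only [Finset.mem_Icc] at hx ⊢; omega
    · intro x hx hx2
      simp only [Finset.mem_Icc] at hx hx2
      rw [D0_out (by omega), mul_zero]
  | succ s ih =>
    intro M
    have hstep : kk + (s+1) = (kk + s) + 1 := by omega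
    rw [hstep, Phi_succ]
    have hterm : ∀ n ∈ Finset.range (M+1),
        (PowerSeries.X:R)^(n^2 + (if kk + s < kk then n else 0)) * (P (M-n))⁻¹ * Phi kk (kk+s) n
        = ∑ r ∈ Finset.Icc (-(M:ℤ)) (M:ℤ),
            PowerSeries.C (R := ℚ) (sg r) * Xp ((s+1) * r^2 + (2*kk+1) * TT r) *
              ((PowerSeries.X:R)^(n^2) * (P (M-n))⁻¹ * D0 n r) := by
      intro n hn
      simp only [Finset.mem_range] at hn
      rw [if_neg (by omega), Nat.add_zero, ih n, Finset.mul_sum]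
      have hsub : Finset.Icc (-(n:ℤ)) (n:ℤ) ⊆ Finset.Icc (-(M:ℤ)) (M:ℤ) := by
        intro x hx; simp only [Finset.mem_Icc] at hx ⊢; omega
      rw [Finset.sum_subset hsub (by
        intro x hx hx2
        simp only [Finset.mem_Icc] at hx hx2
        rw [D0_out (by omega)]
        ring)]
      apply Finset.sum_congr rfl
      intro r _
      ring
    rw [Finset.sum_congr rfl hterm, Finset.sum_comm]
    apply Finset.sum_congr rfl
    intro r hr
    rw [← Finset.mul_sum, K1 M r]
    have he : Xp (((s:ℤ)+1) * r^2 + (2*kk+1) * TT r) * Xp (r^2) = Xp (((s:ℤ)+1+1) * r^2 + (2*kk+1) * TT r) := by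
      have hexp : (((s:ℤ)+1) * r^2 + (2*kk+1) * TT r) + r^2 = ((s:ℤ)+1+1) * r^2 + (2*kk+1) * TT r := by
        push_cast; ring
      have hnn1 : (0:ℤ) ≤ ((s:ℤ)+1) * r^2 + (2*kk+1) * TT r :=
        expo_nonneg _ _ r (by omega) (by omega)
      rw [← Xp_add hnn1 (sq_nonneg r), hexp]
    have hc : ((((s+1):ℕ)+1) : ℤ) * r^2 + (2*kk+1) * TT r = ((s:ℤ)+1+1) * r^2 + (2*kk+1) * TT r := by
      push_cast; ring
    rw [hc, ← he]
    ring

-- Part F : tuples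
attribute [local instance] Classical.propDecidable

noncomputable instance : DecidableEq (ℕ → ℕ) := Classical.decEq _

def cons0 (n : ℕ) (g : ℕ → ℕ) : ℕ → ℕ := fun j => match j with
  | 0 => n
  | (j'+1) => g j'

@[simp] lemma cons0_zero (n : ℕ) (g : ℕ → ℕ) : cons0 n g 0 = n := rfl
@[simp] lemma cons0_succ (n : ℕ) (g : ℕ → ℕ) (j : ℕ) : cons0 n g (j+1) = g j := rfl

noncomputable def Tup : ℕ → ℕ → Finset (ℕ → ℕ)
  | 0, _ => {fun _ => 0}
  | (t+1), M => (Finset.range (M+1)).biUnion (fun n => (Tup t n).image (cons0 n))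

lemma mem_Tup : ∀ t M (g : ℕ → ℕ), g ∈ Tup t M ↔
    (Antitone g ∧ (∀ j, t ≤ j → g j = 0) ∧ g 0 ≤ M) := by
  intro t
  induction t with
  | zero =>
    intro M g
    constructor
    · intro hg
      simp only [Tup, Finset.mem_singleton] at hg
      subst hg
      exact ⟨antitone_const, fun j _ => rfl, Nat.zero_le M⟩
    · rintro ⟨-, h0, -⟩
      simp only [Tup, Finset.mem_singleton]
      funext j
      exact h0 j (by omega)
  | succ t ih =>
    intro M g
    constructor
    · intro hg
      simp only [Tup, Finset.mem_biUnion, Finset.mem_image, Finset.mem_range] at hg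
      obtain ⟨n, hn, h, hh, rfl⟩ := hg
      obtain ⟨hanti, hvan, hle⟩ := (ih n h).1 hh
      have h0n : h 0 ≤ n := hle
      refine ⟨?_, ?_, by simpa using (by omega : n ≤ M)⟩
      · apply antitone_nat_of_succ_le
        intro j
        cases j with
        | zero => simpa using h0n
        | succ j' => simpa using hanti (Nat.le_succ j')
      · intro j hj
        match j, hj with
        | (j'+1), hj => simpa using hvan j' (by omega)
    · rintro ⟨hanti, hvan, hle⟩
      simp only [Tup, Finset.mem_biUnion, Finset.mem_image, Finset.mem_range]
      refine ⟨g 0, by omega, fun j => g (j+1), ?_, ?_⟩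
      · rw [ih]
        refine ⟨fun a b hab => hanti (by omega : a+1 ≤ b+1), fun j hj => hvan (j+1) (by omega),
          hanti (by omega : 0 ≤ 1)⟩
      · funext j
        cases j with
        | zero => rfl
        | succ j' => rfl

lemma cons0_inj (n : ℕ) : ∀ h h' : ℕ → ℕ, cons0 n h = cons0 n h' → h = h' := by
  intro h h' he
  funext j
  have := congrFun he (j+1)
  simpa using this

lemma Tup_sum {β : Type*} [AddCommMonoid β] (t M : ℕ) (f : (ℕ → ℕ) → β) :
    ∑ g ∈ Tup (t+1) M, f g = ∑ n ∈ Finset.range (M+1), ∑ h ∈ Tup t n, f (cons0 n h) := by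
  rw [show Tup (t+1) M = (Finset.range (M+1)).biUnion (fun n => (Tup t n).image (cons0 n)) from rfl]
  rw [Finset.sum_biUnion]
  · apply Finset.sum_congr rfl
    intro n _
    apply Finset.sum_image
    intro h _ h' _ hhe
    exact cons0_inj n h h' hhe
  · -- pairwise disjoint
    intro a ha b hb hab
    simp only [Finset.disjoint_left]
    intro s hs hs2
    simp only [Finset.mem_image] at hs hs2
    obtain ⟨h1, _, hc1⟩ := hs
    obtain ⟨h2, _, hc2⟩ := hs2
    apply hab
    have e1 : s 0 = a := by rw [← hc1]; rfl
    have e2 : s 0 = b := by rw [← hc2]; rfl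
    omega

/-- exponent of a tuple -/
def EE (kk t : ℕ) (g : ℕ → ℕ) : ℕ :=
  ∑ j ∈ Finset.range t, (g j)^2 + ∑ j ∈ Finset.Ico (t - kk) t, g j

/-- weight of a tuple -/
noncomputable def WW (t : ℕ) (g : ℕ → ℕ) : R :=
  ∏ j ∈ Finset.range t, (P (g j - g (j+1)))⁻¹

lemma Phi_closed (kk : ℕ) : ∀ t M, Phi kk t M =
    ∑ g ∈ Tup t M, (PowerSeries.X:R)^(EE kk t g) * (P (M - g 0))⁻¹ * WW t g := by
  intro t
  induction t with
  | zero =>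
    intro M
    rw [Phi_zero, show Tup 0 M = {fun _ => 0} from rfl, Finset.sum_singleton]
    simp [EE, WW]
  | succ t ih =>
    intro M
    rw [Phi_succ, Tup_sum t M]
    apply Finset.sum_congr rfl
    intro n hn
    simp only [Finset.mem_range] at hn
    rw [ih n, Finset.mul_sum]
    apply Finset.sum_congr rfl
    intro h hh
    obtain ⟨hanti, hvan, hle⟩ := (mem_Tup t n h).1 hh
    have hWW : WW (t+1) (cons0 n h) = (P (n - h 0))⁻¹ * WW t h := by
      rw [WW, Finset.prod_range_succ']
      rw [WW]
      rw [mul_comm]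
      congr 1
    have hEE : EE kk (t+1) (cons0 n h) = (n^2 + (if t < kk then n else 0)) + EE kk t h := by
      rw [EE, EE, Finset.sum_range_succ']
      simp only [cons0_succ, cons0_zero]
      have hlin : ∑ j ∈ Finset.Ico ((t+1) - kk) (t+1), (cons0 n h) j
          = (if t < kk then n else 0) + ∑ j ∈ Finset.Ico (t - kk) t, h j := by
        rcases Nat.lt_or_ge t kk with hc | hc
        · rw [if_pos hc]
          have e1 : (t+1) - kk = 0 := by omega
          have e2 : t - kk = 0 := by omega
          rw [e1, e2]
          simp only [← Finset.range_eq_Ico]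
          rw [Finset.sum_range_succ']
          simp only [cons0_succ, cons0_zero]
          omega
        · rw [if_neg (by omega)]
          have e1 : (t+1) - kk = (t - kk) + 1 := by omega
          rw [e1, Finset.sum_Ico_eq_sum_range, Finset.sum_Ico_eq_sum_range]
          have e2 : t + 1 - (t - kk + 1) = t - (t - kk) := by omega
          rw [e2, zero_add]
          apply Finset.sum_congr rfl
          intro i _
          have : t - kk + 1 + i = (t - kk + i) + 1 := by omega
          rw [this, cons0_succ]
      rw [hlin]
      ring
    rw [hWW, hEE, pow_add]
    simp only [cons0_zero]
    ring

-- Part G : truncation and coefficient extraction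
lemma EE_ge (kk t M : ℕ) (g : ℕ → ℕ) (hg : g ∈ Tup t M) : (g 0)^2 ≤ EE kk t g := by
  rcases Nat.eq_zero_or_pos t with h0 | hpos
  · obtain ⟨-, hvan, -⟩ := (mem_Tup t M g).1 hg
    rw [hvan 0 (by omega)]
    simp
  · have h1 : (g 0)^2 ≤ ∑ j ∈ Finset.range t, (g j)^2 :=
      Finset.single_le_sum (f := fun j => (g j)^2) (fun i _ => Nat.zero_le _)
        (Finset.mem_range.mpr hpos)
    rw [EE]
    omega

lemma P_mul_inv_split (a b : ℕ) (h : a ≤ b) : P b * (P a)⁻¹ = Pf a b := by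
  rw [P_split a b h]
  calc P a * Pf a b * (P a)⁻¹ = Pf a b * (P a * (P a)⁻¹) := by ring
    _ = Pf a b := by rw [P_mul_inv, mul_one]

lemma MD_Pd_mul_inv (d b : ℕ) (h : d ≤ b) : MD d (P d * (P b)⁻¹) 1 := by
  have h1 : P d * (P b)⁻¹ = (Pf d b)⁻¹ := by
    have h2 : (P d * (P b)⁻¹) * Pf d b = 1 := by
      calc (P d * (P b)⁻¹) * Pf d b = (P d * Pf d b) * (P b)⁻¹ := by ring
        _ = P b * (P b)⁻¹ := by rw [← P_split d b h]
        _ = 1 := P_mul_inv b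
    have hne : constantCoeff (R := ℚ) (Pf d b) ≠ 0 := by rw [constCoeff_Pf]; norm_num
    calc P d * (P b)⁻¹ = (P d * (P b)⁻¹) * (Pf d b * (Pf d b)⁻¹) := by
          rw [PowerSeries.mul_inv_cancel _ hne, mul_one]
      _ = ((P d * (P b)⁻¹) * Pf d b) * (Pf d b)⁻¹ := by ring
      _ = (Pf d b)⁻¹ := by rw [h2, one_mul]
  rw [h1]
  exact MD.inv_one (by rw [constCoeff_Pf]; norm_num) (MD_Pf_one le_rfl)

lemma unitpart (d : ℕ) (r : ℤ) (hr : r.natAbs ≤ d) :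
    MD d (P d * P (2*d) * D0 (2*d) r) 1 := by
  have key : ∀ a : ℕ, a ≤ d → MD d (P d * P (2*d) * D0 (2*d) (a:ℤ)) 1 := by
    intro a ha
    have hD : D0 (2*d) (a:ℤ) = (P (2*d-a))⁻¹ * (P (2*d+a))⁻¹ := by
      rw [D0, if_pos (by push_cast; omega)]
      have e1 : ((2*d:ℕ):ℤ) - a = ((2*d-a:ℕ):ℤ) := by push_cast; omega
      have e2 : ((2*d:ℕ):ℤ) + a = ((2*d+a:ℕ):ℤ) := by push_cast; omega
      rw [e1, e2, Int.toNat_natCast, Int.toNat_natCast]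
    have hre : P d * P (2*d) * D0 (2*d) (a:ℤ)
        = (P (2*d) * (P (2*d-a))⁻¹) * (P d * (P (2*d+a))⁻¹) := by
      rw [hD]; ring
    rw [hre, P_mul_inv_split (2*d-a) (2*d) (by omega)]
    have h1 : MD d (Pf (2*d-a) (2*d)) 1 := MD_Pf_one (by omega)
    have h2 : MD d (P d * (P (2*d+a))⁻¹) 1 := MD_Pd_mul_inv d (2*d+a) (by omega)
    have := h1.mul h2
    rwa [mul_one] at this
  obtain ⟨a, rfl | rfl⟩ := r.eq_nat_or_neg
  · exact key a (by simpa using hr)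
  · rw [D0_symm]
    exact key a (by simpa using hr)

lemma coeff_CXp (d : ℕ) (c : ℚ) (E : ℤ) (hE : 0 ≤ E) :
    (PowerSeries.coeff (R := ℚ) d) (PowerSeries.C (R := ℚ) c * Xp E)
    = c * (if E = (d:ℤ) then 1 else 0) := by
  rw [Xp, PowerSeries.coeff_C_mul, PowerSeries.coeff_X_pow]
  congr 1
  by_cases h : E = (d:ℤ)
  · rw [if_pos h, if_pos (by omega)]
  · rw [if_neg h, if_neg (by omega)]

lemma coeff_main (d lam kk : ℕ) (r : ℤ) :
    (PowerSeries.coeff (R := ℚ) d)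
      (P d * (P (2*d) * (PowerSeries.C (R := ℚ) (sg r) * Xp (((lam:ℤ)+1) * r^2 + (2*(kk:ℤ)+1) * TT r)
        * D0 (2*d) r)))
    = sg r * (if ((lam:ℤ)+1) * r^2 + (2*(kk:ℤ)+1) * TT r = (d:ℤ) then 1 else 0) := by
  set E : ℤ := ((lam:ℤ)+1) * r^2 + (2*(kk:ℤ)+1) * TT r with hEdef
  have hE0 : 0 ≤ E := expo_nonneg _ _ r (by omega) (by omega)
  have hEr : r^2 ≤ E := by
    have := TT_nonneg r
    nlinarith [sq_nonneg r]
  rcases le_or_gt r.natAbs d with hrd | hrd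
  · -- in range
    have hu := unitpart d r hrd
    have hre : P d * (P (2*d) * (PowerSeries.C (R := ℚ) (sg r) * Xp E * D0 (2*d) r))
        = PowerSeries.C (R := ℚ) (sg r) * Xp E * (P d * P (2*d) * D0 (2*d) r) := by ring
    rw [hre]
    have hmd : MD d (PowerSeries.C (R := ℚ) (sg r) * Xp E * (P d * P (2*d) * D0 (2*d) r))
        (PowerSeries.C (R := ℚ) (sg r) * Xp E) := by
      have := hu.mul_left (PowerSeries.C (R := ℚ) (sg r) * Xp E)
      rwa [mul_one] at this
    rw [hmd.coeff_eq d le_rfl]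
    exact coeff_CXp d (sg r) E hE0
  · -- |r| > d : both sides vanish
    have hsq : ((d:ℤ)+1)^2 ≤ r^2 := by
      have h1 : ((d:ℤ)+1) ≤ |r| := by
        rw [Int.abs_eq_natAbs]; omega
      nlinarith [abs_nonneg r, sq_abs r]
    have hdE : (d:ℤ) < E := by nlinarith
    have hre : P d * (P (2*d) * (PowerSeries.C (R := ℚ) (sg r) * Xp E * D0 (2*d) r))
        = (PowerSeries.X:R)^(E.toNat) * (PowerSeries.C (R := ℚ) (sg r) * (P d * P (2*d) * D0 (2*d) r)) := by
      rw [Xp]; ring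
    rw [hre]
    have hz : MD d ((PowerSeries.X:R)^(E.toNat) *
        (PowerSeries.C (R := ℚ) (sg r) * (P d * P (2*d) * D0 (2*d) r))) 0 :=
      MD_X_pow_mul E.toNat (by omega) _
    rw [hz.coeff_eq d le_rfl, if_neg (by omega), mul_zero, map_zero]

/-- main truncation: `P(2d) · Phi ≡ bare sum over Tup t d` -/
lemma bare_cong (kk t d : ℕ) :
    MD d (P (2*d) * Phi kk t (2*d))
      (∑ g ∈ Tup t d, (PowerSeries.X:R)^(EE kk t g) * WW t g) := by
  rw [Phi_closed kk t (2*d), Finset.mul_sum]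
  have hterm : ∀ g ∈ Tup t (2*d),
      P (2*d) * ((PowerSeries.X:R)^(EE kk t g) * (P (2*d - g 0))⁻¹ * WW t g)
      = (PowerSeries.X:R)^(EE kk t g) * Pf (2*d - g 0) (2*d) * WW t g := by
    intro g hg
    have hg0 : g 0 ≤ 2*d := ((mem_Tup _ _ g).1 hg).2.2
    rw [← P_mul_inv_split (2*d - g 0) (2*d) (by omega)]
    ring
  rw [Finset.sum_congr rfl hterm]
  -- step A: restrict to Tup t d
  have hsub : Tup t d ⊆ Tup t (2*d) := by
    intro g hg
    rw [mem_Tup] at hg ⊢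
    exact ⟨hg.1, hg.2.1, by omega⟩
  have stepA : MD d (∑ g ∈ Tup t (2*d), (PowerSeries.X:R)^(EE kk t g) * Pf (2*d - g 0) (2*d) * WW t g)
      (∑ g ∈ Tup t d, (PowerSeries.X:R)^(EE kk t g) * Pf (2*d - g 0) (2*d) * WW t g) := by
    rw [MD, ← Finset.sum_sdiff hsub]
    have : ∀ g ∈ Tup t (2*d) \ Tup t d,
        (PowerSeries.X:R)^(d+1) ∣ (PowerSeries.X:R)^(EE kk t g) * Pf (2*d - g 0) (2*d) * WW t g := by
      intro g hg
      simp only [Finset.mem_sdiff] at hg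
      obtain ⟨hg1, hg2⟩ := hg
      have hprops := (mem_Tup _ _ g).1 hg1
      have hg0 : d < g 0 := by
        by_contra hcon
        exact hg2 ((mem_Tup _ _ g).2 ⟨hprops.1, hprops.2.1, by omega⟩)
      have hE : d + 1 ≤ EE kk t g := by
        have := EE_ge kk t (2*d) g hg1
        nlinarith
      exact Dvd.dvd.mul_right (Dvd.dvd.mul_right (pow_dvd_pow _ hE) _) _
    have hdvd := Finset.dvd_sum this
    simpa using hdvd
  refine stepA.trans (MD.sum _ _ _ ?_)
  intro g hg
  have hg0 : g 0 ≤ d := ((mem_Tup _ _ g).1 hg).2.2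
  have h1 : MD d (Pf (2*d - g 0) (2*d)) 1 := MD_Pf_one (by omega)
  have := (h1.mul_left ((PowerSeries.X:R)^(EE kk t g))).mul_right (WW t g)
  rwa [mul_one] at this

lemma sum_shrink (d : ℕ) (f : ℤ → ℚ) (hf : ∀ r : ℤ, (r < -(d:ℤ) ∨ (d:ℤ) < r) → f r = 0)
    {a b : ℤ} (ha : a ≤ -(d:ℤ)) (hb : (d:ℤ) ≤ b) :
    ∑ r ∈ Finset.Icc a b, f r = ∑ r ∈ Finset.Icc (-(d:ℤ)) (d:ℤ), f r := by
  symm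
  apply Finset.sum_subset
  · intro x hx; simp only [Finset.mem_Icc] at hx ⊢; omega
  · intro x hx hx2
    simp only [Finset.mem_Icc] at hx hx2
    exact hf x (by omega)

end AGaux

/-- `∏_{j=1}^m (1 - q^{a j})`, the q-Pochhammer `(q^a; q^a)_m` as a power series in `q = X`. -/
noncomputable def qpochA (a m : ℕ) : PowerSeries ℚ :=
  ∏ j ∈ Finset.range m, (1 - (PowerSeries.X : PowerSeries ℚ) ^ (a * (j + 1)))

/-- `(q)_m = ∏_{j=1}^m (1 - q^j)`. -/
noncomputable def qpoch (m : ℕ) : PowerSeries ℚ := qpochA 1 m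

/-- Gaussian binomial `[N choose M]_{q^a}`: `(q^a)_N / ((q^a)_M (q^a)_{N-M})` when
`0 ≤ M ≤ N`, and `0` otherwise. -/
noncomputable def qbinomA (a : ℕ) (N M : ℤ) : PowerSeries ℚ :=
  if 0 ≤ M ∧ M ≤ N then
    qpochA a N.toNat * (qpochA a M.toNat)⁻¹ * (qpochA a (N - M).toNat)⁻¹
  else 0

/-- Gaussian binomial `[N choose M]_q`. -/
noncomputable def qbinom (N M : ℤ) : PowerSeries ℚ := qbinomA 1 N M

lemma qpoch_eq_P (m : ℕ) : qpoch m = P m := by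
  rw [qpoch, qpochA, P]
  apply Finset.prod_congr rfl
  intro j _
  rw [one_mul]

/-- Andrews–Gordon identities in alternating-sum (bosonic) form, coefficientwise:
`(1/(q)_∞) ∑_{r∈ℤ} (-1)^r q^{r((2k+1)r+2k-2i+1)/2}
  = ∑_{n₁ ≥ ⋯ ≥ n_{k-1} ≥ 0} q^{n₁²+⋯+n_{k-1}² + n_i+⋯+n_{k-1}} /
      ((q)_{n₁-n₂} ⋯ (q)_{n_{k-2}-n_{k-1}} (q)_{n_{k-1}})`.
Both sides are multiplied by `(q)_∞` and the coefficient of `q^d` is taken; terms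
with `|r| > d+1` or `n₁ > d`, and factors of `(q)_∞` beyond degree `d`, do not
contribute.  The tuple is encoded as `g : ℕ → ℕ` with `g j = n_{j+1}`, `g j = 0`
for `j ≥ k - 1`. -/
theorem andrews_gordon (k i : ℕ) (h1 : 1 ≤ i) (h2 : i ≤ k) (d : ℕ) :
    (∑ r ∈ Finset.Icc (-(d : ℤ) - 1) ((d : ℤ) + 1),
        (-1 : ℚ) ^ r * (PowerSeries.coeff (R := ℚ) d)
          ((PowerSeries.X : PowerSeries ℚ) ^
            (r * ((2 * k + 1) * r + 2 * k - 2 * i + 1) / 2).toNat)) =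
      (PowerSeries.coeff (R := ℚ) d)
        (qpoch d *
          ∑ᶠ (g : ℕ → ℕ) (_ : Antitone g ∧ (∀ j, k - 1 ≤ j → g j = 0) ∧ g 0 ≤ d),
            (PowerSeries.X : PowerSeries ℚ) ^
                (∑ j ∈ Finset.range (k - 1), (g j) ^ 2 +
                  ∑ j ∈ Finset.Ico (i - 1) (k - 1), g j) *
              ∏ j ∈ Finset.range (k - 1), (qpoch (g j - g (j + 1)))⁻¹) := by
  classical
  set kk := k - i with hkk
  set lam := i - 1 with hlam
  have hkl : kk + lam = k - 1 := by omega
  -- the integer exponent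
  set E : ℤ → ℤ := fun r => ((lam:ℤ)+1) * r^2 + (2*(kk:ℤ)+1) * TT r with hE
  -- the indicator function
  set f : ℤ → ℚ := fun r => sg r * (if E r = (d:ℤ) then 1 else 0) with hf
  have hEr2 : ∀ r : ℤ, r^2 ≤ E r := by
    intro r
    have hEr : E r = ((lam:ℤ)+1) * r^2 + (2*(kk:ℤ)+1) * TT r := rfl
    have hl0 : (0:ℤ) ≤ (lam:ℤ) := by positivity
    have hk0 : (0:ℤ) ≤ (kk:ℤ) := by positivity
    have ht := TT_nonneg r
    have h := sq_nonneg r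
    have m1 : (0:ℤ) ≤ (lam:ℤ) * r^2 := mul_nonneg hl0 h
    have m2 : (0:ℤ) ≤ (2*(kk:ℤ)+1) * TT r := mul_nonneg (by omega) ht
    rw [hEr]
    nlinarith
  have hvan : ∀ r : ℤ, (r < -(d:ℤ) ∨ (d:ℤ) < r) → f r = 0 := by
    intro r hr
    have h1' : ((d:ℤ)+1) ≤ |r| := by
      rcases hr with h | h
      · rw [abs_of_neg (by omega)]; omega
      · rw [abs_of_pos (by omega)]; omega
    have hsq : ((d:ℤ)+1)^2 ≤ r^2 := by nlinarith [sq_abs r]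
    have : (d:ℤ) < E r := by have := hEr2 r; nlinarith
    rw [hf]
    simp only
    rw [if_neg (by omega), mul_zero]
  -- LHS = sum of f over Icc (-d-1) (d+1)
  have hLHS : (∑ r ∈ Finset.Icc (-(d : ℤ) - 1) ((d : ℤ) + 1),
        (-1 : ℚ) ^ r * (PowerSeries.coeff (R := ℚ) d)
          ((PowerSeries.X : PowerSeries ℚ) ^
            (r * ((2 * k + 1) * r + 2 * k - 2 * i + 1) / 2).toNat))
      = ∑ r ∈ Finset.Icc (-(d : ℤ) - 1) ((d : ℤ) + 1), f r := by
    apply Finset.sum_congr rfl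
    intro r _
    have h5 := TT2 r
    have hli : ((lam:ℕ):ℤ) = (i:ℤ) - 1 := by omega
    have hki : ((kk:ℕ):ℤ) = (k:ℤ) - (i:ℤ) := by omega
    have h2e : 2 * E r = r * ((2 * (k:ℤ) + 1) * r + 2 * (k:ℤ) - 2 * (i:ℤ) + 1) := by
      rw [hE]
      simp only
      rw [hli, hki]
      linear_combination (2*((k:ℤ)-(i:ℤ))+1) * h5
    have hexp : (r * ((2 * (k:ℤ) + 1) * r + 2 * (k:ℤ) - 2 * (i:ℤ) + 1) / 2) = E r := by
      omega
    rw [hexp, PowerSeries.coeff_X_pow, hf]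
    simp only
    rw [sg]
    congr 1
    have hE0 : 0 ≤ E r := by have := hEr2 r; nlinarith [sq_nonneg r]
    by_cases hc : E r = (d:ℤ)
    · rw [if_pos (by omega), if_pos hc]
    · rw [if_neg (by omega), if_neg hc]
  rw [hLHS]
  -- RHS transformations
  rw [qpoch_eq_P]
  have hset : {g : ℕ → ℕ | Antitone g ∧ (∀ j, k - 1 ≤ j → g j = 0) ∧ g 0 ≤ d}
      = (↑(Tup (k-1) d) : Set (ℕ → ℕ)) := by
    ext g
    rw [Set.mem_setOf_eq, Finset.mem_coe, mem_Tup]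
  have hfin : (∑ᶠ (g : ℕ → ℕ) (_ : Antitone g ∧ (∀ j, k - 1 ≤ j → g j = 0) ∧ g 0 ≤ d),
        (PowerSeries.X : PowerSeries ℚ) ^
            (∑ j ∈ Finset.range (k - 1), (g j) ^ 2 +
              ∑ j ∈ Finset.Ico (i - 1) (k - 1), g j) *
          ∏ j ∈ Finset.range (k - 1), (qpoch (g j - g (j + 1)))⁻¹)
      = ∑ g ∈ Tup (k-1) d, (PowerSeries.X:R)^(EE kk (k-1) g) * WW (k-1) g := by
    have step1 : (∑ᶠ (g : ℕ → ℕ) (_ : Antitone g ∧ (∀ j, k - 1 ≤ j → g j = 0) ∧ g 0 ≤ d),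
        (PowerSeries.X : PowerSeries ℚ) ^
            (∑ j ∈ Finset.range (k - 1), (g j) ^ 2 +
              ∑ j ∈ Finset.Ico (i - 1) (k - 1), g j) *
          ∏ j ∈ Finset.range (k - 1), (qpoch (g j - g (j + 1)))⁻¹)
        = ∑ g ∈ Tup (k-1) d,
            (PowerSeries.X : PowerSeries ℚ) ^
              (∑ j ∈ Finset.range (k - 1), (g j) ^ 2 +
                ∑ j ∈ Finset.Ico (i - 1) (k - 1), g j) *
            ∏ j ∈ Finset.range (k - 1), (qpoch (g j - g (j + 1)))⁻¹ := by
      rw [← finsum_mem_coe_finset, ← hset]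
      apply finsum_congr
      intro g
      have hpq : (Antitone g ∧ (∀ j, k - 1 ≤ j → g j = 0) ∧ g 0 ≤ d)
          = (g ∈ {g : ℕ → ℕ | Antitone g ∧ (∀ j, k - 1 ≤ j → g j = 0) ∧ g 0 ≤ d}) := by
        rw [Set.mem_setOf_eq]
      rw [hpq]
    rw [step1]
    apply Finset.sum_congr rfl
    intro g _
    have hIco : (k-1) - kk = i - 1 := by omega
    rw [EE, WW, hIco]
    congr 1
    apply Finset.prod_congr rfl
    intro j _
    rw [qpoch_eq_P]
  rw [hfin]
  -- congruence to the capped sum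
  have e1 : (PowerSeries.coeff (R := ℚ) d) (P d * ∑ g ∈ Tup (k-1) d, (PowerSeries.X:R)^(EE kk (k-1) g) * WW (k-1) g)
      = (PowerSeries.coeff (R := ℚ) d) (P d * (P (2*d) * Phi kk (k-1) (2*d))) :=
    (((bare_cong kk (k-1) d).mul_left (P d)).coeff_eq d le_rfl).symm
  rw [e1]
  -- expand Phi via the chain
  rw [show k - 1 = kk + lam from hkl.symm, chainD0 kk lam (2*d)]
  rw [Finset.mul_sum, Finset.mul_sum, map_sum]
  have hterm : ∀ r ∈ Finset.Icc (-((2*d:ℕ):ℤ)) ((2*d:ℕ):ℤ),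
      (PowerSeries.coeff (R := ℚ) d)
        (P d * (P (2*d) * (PowerSeries.C (R := ℚ) (sg r) * Xp ((lam+1) * r^2 + (2*kk+1) * TT r)
          * D0 (2*d) r)))
      = f r := by
    intro r _
    rw [coeff_main d lam kk r]
  rw [Finset.sum_congr rfl hterm]
  -- match index ranges
  have hA : ∑ r ∈ Finset.Icc (-((2*d:ℕ):ℤ)) ((2*d:ℕ):ℤ), f r
      = ∑ r ∈ Finset.Icc (-(d:ℤ)) (d:ℤ), f r :=
    sum_shrink d f hvan (by push_cast; omega) (by push_cast; omega)
  have hB : ∑ r ∈ Finset.Icc (-(d:ℤ)-1) ((d:ℤ)+1), f r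
      = ∑ r ∈ Finset.Icc (-(d:ℤ)) (d:ℤ), f r :=
    sum_shrink d f hvan (by omega) (by omega)
  exact hB.trans hA.symm
end
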